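/- arXiv:0810.3021 — 5 statements merged into one kernel-verified Lean document; each statement's English description precedes it below -/
import Mathlib

section
/- For a regular Hausdorff topological space X the following conditions are equivalent: (1) X has a countable k-network (i.e. X is an ℵ₀-space); (2) X is the image of a separable metrizable space under a subproper map; (3) X is k*-metrizable and has a countable network. -/
open Filter Topology Set

universe u

/-- A Hausdorff space `X` is k*-metrizable if it is the image of a metrizable space `M`
under a continuous surjection admitting a section which preserves precompact sets. -/
def KStarMetrizable (X : Type u) [TopologicalSpace X] : Prop :=
  ∃ (M : Type u) (_ : MetricSpace M) (f : M → X) (s : X → M),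
    Continuous f ∧ Function.Surjective f ∧ (∀ x, f (s x) = x) ∧
    ∀ K : Set X, IsCompact K → IsCompact (closure (s '' K))

set_option linter.unusedSectionVars false
set_option maxHeartbeats 1000000

/-- Statement (1): countable k-network. -/
def HasCountableKNetwork (X : Type u) [TopologicalSpace X] : Prop :=
  ∃ 𝒩 : Set (Set X), 𝒩.Countable ∧
    ∀ U : Set X, IsOpen U → ∀ K : Set X, IsCompact K → K ⊆ U →
      ∃ 𝓕 ⊆ 𝒩, 𝓕.Finite ∧ K ⊆ ⋃₀ 𝓕 ∧ ⋃₀ 𝓕 ⊆ U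

def IsSubproperImage (X : Type u) [TopologicalSpace X] : Prop :=
  ∃ (M : Type u) (_ : MetricSpace M), TopologicalSpace.SeparableSpace M ∧
    ∃ f : M → X, Continuous f ∧ Function.Surjective f ∧
      ∃ Z : Set M, f '' Z = univ ∧
        ∀ K : Set X, IsCompact K → IsCompact (closure (Z ∩ f ⁻¹' K))

def HasCountableNetwork (X : Type u) [TopologicalSpace X] : Prop :=
  ∃ 𝒩 : Set (Set X), 𝒩.Countable ∧
    ∀ U : Set X, IsOpen U → ∀ x ∈ U, ∃ N ∈ 𝒩, x ∈ N ∧ N ⊆ U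


noncomputable section
namespace Aleph0
open TopologicalSpace

attribute [local instance] PiNat.metricSpaceNatNat

variable {X : Type u} [TopologicalSpace X]

def TT (N : ℕ → Set X) (σ : ℕ → ℕ) (k : ℕ) : Set X := ⋂ i ≤ k, N (σ i)

lemma TT_subset (N : ℕ → Set X) (σ : ℕ → ℕ) {i k : ℕ} (h : i ≤ k) :
    TT N σ k ⊆ N (σ i) := by
  intro x hx
  simp only [TT, mem_iInter] at hx
  exact hx i h

def MP (N : ℕ → Set X) (σ : ℕ → ℕ) : Prop :=
  ∃ a : X, (∀ k, a ∈ N (σ k)) ∧ ∀ U : Set X, IsOpen U → a ∈ U → ∃ k, TT N σ k ⊆ U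

def sfun (N : ℕ → Set X) (x : X) : ℕ → ℕ := Nat.nth (fun n => x ∈ N n)

lemma sfun_infinite {N : ℕ → Set X} {pad : ℕ → ℕ} (hpad : StrictMono pad)
    (hpadN : ∀ k, N (pad k) = univ) (x : X) : {n | x ∈ N n}.Infinite := by
  apply Set.infinite_of_injective_forall_mem (f := pad) hpad.injective
  intro k
  simp only [mem_setOf_eq, hpadN k, mem_univ]

lemma sfun_mem {N : ℕ → Set X} {pad : ℕ → ℕ} (hpad : StrictMono pad)
    (hpadN : ∀ k, N (pad k) = univ) (x : X) (k : ℕ) : x ∈ N (sfun N x k) :=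
  Nat.nth_mem_of_infinite (sfun_infinite hpad hpadN x) k

lemma sfun_strictMono {N : ℕ → Set X} {pad : ℕ → ℕ} (hpad : StrictMono pad)
    (hpadN : ∀ k, N (pad k) = univ) (x : X) : StrictMono (sfun N x) :=
  Nat.nth_strictMono (sfun_infinite hpad hpadN x)

lemma freq_pigeonhole {T : Set ℕ} (hT : T.Finite) {x_ : ℕ → X} {N : ℕ → Set X}
    (h : ∃ᶠ j in atTop, x_ j ∈ ⋃ n ∈ T, N n) : ∃ n ∈ T, ∃ᶠ j in atTop, x_ j ∈ N n := by
  by_contra hc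
  have hev : ∀ᶠ j in atTop, ∀ n ∈ T, x_ j ∉ N n := by
    rw [Filter.eventually_all_finite hT]
    intro n hn
    exact Filter.not_frequently.1 (fun hf => hc ⟨n, hn, hf⟩)
  obtain ⟨j, hj1, hj2⟩ := (h.and_eventually hev).exists
  simp only [mem_iUnion, exists_prop] at hj1
  obtain ⟨n, hn, hmem⟩ := hj1
  exact hj2 n hn hmem

theorem closure_MP [T2Space X] [RegularSpace X]
    {N : ℕ → Set X} (hNcl : ∀ n, IsClosed (N n))
    {pad : ℕ → ℕ} (hpad : StrictMono pad) (hpadN : ∀ k, N (pad k) = univ)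
    (hkn : ∀ W : Set X, IsOpen W → ∀ L : Set X, IsCompact L → L ⊆ W →
      ∃ T : Set ℕ, T.Finite ∧ (∀ n ∈ T, N n ⊆ W) ∧ L ⊆ ⋃ n ∈ T, N n)
    {K : Set X} (hK : IsCompact K)
    {σ : ℕ → ℕ} (hσ : σ ∈ closure ((fun x => sfun N x) '' K)) : MP N σ := by
  obtain ⟨b, hbA, hbt⟩ := mem_closure_iff_seq_limit.1 hσ
  have hx : ∀ j, ∃ x, x ∈ K ∧ sfun N x = b j := by
    intro j
    rcases hbA j with ⟨x, hx, he⟩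
    exact ⟨x, hx, he⟩
  choose x_ hxK hxe using hx
  -- coordinatewise stabilization
  have hstab : ∀ i, ∀ᶠ j in atTop, sfun N (x_ j) i = σ i := by
    intro i
    have hball : ∀ᶠ j in atTop, b j ∈ Metric.ball σ ((1/2 : ℝ)^i) :=
      hbt (Metric.ball_mem_nhds σ (by positivity))
    filter_upwards [hball] with j hj
    rw [Metric.mem_ball] at hj
    rw [hxe j]
    exact PiNat.apply_eq_of_dist_lt hj le_rfl
  have hmem_tau : ∀ i, ∀ᶠ j in atTop, x_ j ∈ N (σ i) := by
    intro i
    filter_upwards [hstab i] with j hj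
    rw [← hj]
    exact sfun_mem hpad hpadN (x_ j) i
  have hfin_agree : ∀ m : ℕ, ∀ᶠ j in atTop, ∀ i ≤ m, sfun N (x_ j) i = σ i := by
    intro m
    have := (Filter.eventually_all_finite (Set.finite_Iic m)
      (l := atTop) (p := fun i j => sfun N (x_ j) i = σ i)).2 (fun i _ => hstab i)
    filter_upwards [this] with j hj i him
    exact hj i him
  have hrange : ∀ n : ℕ, (∃ᶠ j in atTop, x_ j ∈ N n) → ∃ i, σ i = n := by
    intro n hfr
    obtain ⟨j, hj1, hj2⟩ := (hfr.and_eventually (hfin_agree n)).exists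
    classical
    have hnth : sfun N (x_ j) (Nat.count (fun m => x_ j ∈ N m) n) = n := Nat.nth_count hj1
    set k := Nat.count (fun m => x_ j ∈ N m) n with hkdef
    by_cases hkle : k ≤ n
    · exact ⟨k, by rw [← hj2 k hkle, hnth]⟩
    · exfalso
      push_neg at hkle
      have h1 : sfun N (x_ j) n < sfun N (x_ j) k := (sfun_strictMono hpad hpadN _) hkle
      rw [hnth, hj2 n le_rfl] at h1
      have h2 : n ≤ sfun N (x_ j) n := (sfun_strictMono hpad hpadN (x_ j)).le_apply
      rw [hj2 n le_rfl] at h2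
      omega
  -- cluster point
  have hle : map x_ atTop ≤ 𝓟 K :=
    le_principal_iff.2 (Filter.mem_map.2 (Filter.Eventually.of_forall hxK))
  obtain ⟨a, haK, hacl⟩ := hK hle
  have hfreq : ∀ (z : X), ClusterPt z (map x_ atTop) →
      ∀ V : Set X, IsOpen V → z ∈ V → ∃ᶠ j in atTop, x_ j ∈ V := by
    intro z hz V hV hzV
    exact (mapClusterPt_iff_frequently.1 (mapClusterPt_def.2 hz)) V (hV.mem_nhds hzV)
  -- uniqueness of cluster points
  have huniq : ∀ z : X, ClusterPt z (map x_ atTop) → z = a := by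
    intro z hzcl
    by_contra hza
    obtain ⟨U, V, hU, hV, hzU, haV, hUV⟩ := t2_separation hza
    -- closed shrinking of V around a
    obtain ⟨Cc, hCc_nhds, hCc_closed, hCcV⟩ := exists_mem_nhds_isClosed_subset (hV.mem_nhds haV)
    have haV' : a ∈ interior Cc := mem_interior_iff_mem_nhds.2 hCc_nhds
    have hclV' : closure (interior Cc) ⊆ V :=
      (closure_minimal interior_subset hCc_closed).trans hCcV
    set W := (closure (interior Cc))ᶜ with hWdef
    have hWopen : IsOpen W := isClosed_closure.isOpen_compl
    have hUW : U ⊆ W := by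
      intro y hy
      intro hyc
      exact hUV.le_bot ⟨hy, hclV' hyc⟩
    -- closed shrinking of U around z
    obtain ⟨Cz, hCz_nhds, hCz_closed, hCzU⟩ := exists_mem_nhds_isClosed_subset (hU.mem_nhds hzU)
    have hzU' : z ∈ interior Cz := mem_interior_iff_mem_nhds.2 hCz_nhds
    have hclU'U : closure (interior Cz) ⊆ U :=
      (closure_minimal interior_subset hCz_closed).trans hCzU
    have hKb : IsCompact (K ∩ closure (interior Cz)) := hK.inter_right isClosed_closure
    have hKbW : K ∩ closure (interior Cz) ⊆ W := fun y hy => hUW (hclU'U hy.2)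
    obtain ⟨T, hTfin, hTW, hTcov⟩ := hkn W hWopen _ hKb hKbW
    have hfr : ∃ᶠ j in atTop, x_ j ∈ ⋃ n ∈ T, N n := by
      apply (hfreq z hzcl (interior Cz) isOpen_interior hzU').mono
      intro j hj
      exact hTcov ⟨hxK j, subset_closure hj⟩
    obtain ⟨n, hnT, hfn⟩ := freq_pigeonhole hTfin hfr
    obtain ⟨i, hi⟩ := hrange n hfn
    have hev : ∀ᶠ j in atTop, x_ j ∈ N n := by rw [← hi]; exact hmem_tau i
    have hfrV : ∃ᶠ j in atTop, x_ j ∈ interior Cc :=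
      hfreq a hacl (interior Cc) isOpen_interior haV'
    obtain ⟨j, hj1, hj2⟩ := (hfrV.and_eventually hev).exists
    exact (hTW n hnT hj2) (subset_closure hj1)
  -- the sequence converges to a
  have htend : Tendsto x_ atTop (𝓝 a) := by
    by_contra hnt
    rw [tendsto_nhds] at hnt
    push_neg at hnt
    obtain ⟨U, hU, haU, hne⟩ := hnt
    have hfr : ∃ᶠ j in atTop, x_ j ∈ Uᶜ := by
      have hne' : ¬ ∀ᶠ j in atTop, x_ j ∈ U := hne
      rw [Filter.not_eventually] at hne'
      exact hne'.mono (fun j hj => hj)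
    have hGne : (map x_ atTop ⊓ 𝓟 Uᶜ).NeBot := by
      rw [← Filter.frequently_map (m := x_) (f := atTop) (P := fun y => y ∈ Uᶜ)] at hfr
      exact Filter.frequently_iff_neBot.mp hfr
    have hGK : map x_ atTop ⊓ 𝓟 Uᶜ ≤ 𝓟 K := le_trans inf_le_left hle
    obtain ⟨w, hwK, hwcl⟩ := hK hGK
    have hw1 : ClusterPt w (map x_ atTop) := hwcl.mono inf_le_left
    have hw2 : w ∈ Uᶜ := by
      have : ClusterPt w (𝓟 Uᶜ) := hwcl.mono inf_le_right
      have := mem_closure_iff_clusterPt.2 this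
      rwa [IsClosed.closure_eq (hU.isClosed_compl)] at this
    exact hw2 (huniq w hw1 ▸ haU)
  -- now establish MP
  refine ⟨a, ?_, ?_⟩
  · intro i
    by_contra hna
    have hfr : ∃ᶠ j in atTop, x_ j ∈ (N (σ i))ᶜ :=
      hfreq a hacl _ (hNcl (σ i)).isOpen_compl hna
    obtain ⟨j, hj1, hj2⟩ := (hfr.and_eventually (hmem_tau i)).exists
    exact hj1 hj2
  · intro U hU haU
    have hev : ∀ᶠ j in atTop, x_ j ∈ U := htend (hU.mem_nhds haU)
    obtain ⟨J, hJ⟩ := eventually_atTop.1 hev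
    have htail : Tendsto (fun i => x_ (i + J)) atTop (𝓝 a) :=
      htend.comp (tendsto_add_atTop_nat J)
    have hLK : IsCompact (insert a (range fun i => x_ (i + J))) :=
      htail.isCompact_insert_range
    have hLU : insert a (range fun i => x_ (i + J)) ⊆ U := by
      rintro y (rfl | ⟨i, rfl⟩)
      · exact haU
      · exact hJ (i + J) (Nat.le_add_left J i)
    obtain ⟨T, hTfin, hTU, hTcov⟩ := hkn U hU _ hLK hLU
    have hfrU : ∃ᶠ j in atTop, x_ j ∈ ⋃ n ∈ T, N n := by
      apply Filter.Eventually.frequently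
      filter_upwards [Filter.eventually_ge_atTop J] with j hj
      have : x_ j ∈ insert a (range fun i => x_ (i + J)) := by
        right
        exact ⟨j - J, by show x_ (j - J + J) = x_ j; rw [Nat.sub_add_cancel hj]⟩
      exact hTcov this
    obtain ⟨n, hnT, hfn⟩ := freq_pigeonhole hTfin hfrU
    obtain ⟨i, hi⟩ := hrange n hfn
    refine ⟨i, fun y hy => hTU n hnT ?_⟩
    have := TT_subset N σ (le_refl i) hy
    rwa [hi] at this

def Mtype (N : ℕ → Set X) : Type := {σ : ℕ → ℕ // MP N σ}

instance (N : ℕ → Set X) : MetricSpace (Mtype N) := Subtype.metricSpace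

def fM {N : ℕ → Set X} (σ : Mtype N) : X := σ.2.choose

lemma fM_mem {N : ℕ → Set X} (σ : Mtype N) (k : ℕ) : fM σ ∈ N (σ.1 k) :=
  σ.2.choose_spec.1 k

lemma fM_conv {N : ℕ → Set X} (σ : Mtype N) :
    ∀ U : Set X, IsOpen U → fM σ ∈ U → ∃ k, TT N σ.1 k ⊆ U :=
  σ.2.choose_spec.2

lemma mem_TT {N : ℕ → Set X} {σ : ℕ → ℕ} {k : ℕ} {x : X}
    (h : ∀ i, x ∈ N (σ i)) : x ∈ TT N σ k := by
  simp only [TT, mem_iInter]; exact fun i _ => h i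

lemma MP_unique [T2Space X] {N : ℕ → Set X} {σ : ℕ → ℕ} {a b : X}
    (ha2 : ∀ U : Set X, IsOpen U → a ∈ U → ∃ k, TT N σ k ⊆ U)
    (hb1 : ∀ k, b ∈ N (σ k)) : b = a := by
  by_contra hne
  obtain ⟨U, V, hU, hV, haU, hbV, hUV⟩ := t2_separation (show a ≠ b from fun h => hne h.symm)
  obtain ⟨k, hk⟩ := ha2 U hU haU
  exact hUV.le_bot ⟨hk (mem_TT hb1), hbV⟩

lemma fM_continuous (N : ℕ → Set X) : Continuous (fM : Mtype N → X) := by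
  rw [continuous_def]
  intro U hU
  rw [Metric.isOpen_iff]
  intro σ hσ
  obtain ⟨k, hk⟩ := fM_conv σ U hU hσ
  refine ⟨(1/2 : ℝ)^k, by positivity, ?_⟩
  intro τ hτ
  rw [Metric.mem_ball, show dist τ σ = dist τ.1 σ.1 from rfl] at hτ
  have hag : ∀ i ≤ k, τ.1 i = σ.1 i := fun i hi => PiNat.apply_eq_of_dist_lt hτ hi
  have : fM τ ∈ TT N σ.1 k := by
    simp only [TT, mem_iInter]
    intro i hi
    rw [← hag i hi]
    exact fM_mem τ i
  exact hk this

lemma sfun_surj {N : ℕ → Set X} (x : X) {n : ℕ} (hn : x ∈ N n) : ∃ k, sfun N x k = n := by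
  classical
  exact ⟨Nat.count (fun n => x ∈ N n) n, Nat.nth_count hn⟩

lemma sfun_le {N : ℕ → Set X} {pad : ℕ → ℕ} (hpad : StrictMono pad)
    (hpadN : ∀ k, N (pad k) = univ) (x : X) (k : ℕ) : sfun N x k ≤ pad k := by
  classical
  have hcount : k < Nat.count (fun n => x ∈ N n) (pad k + 1) := by
    rw [Nat.count_eq_card_filter_range]
    have : (Finset.range (k+1)).card ≤
        ((Finset.range (pad k + 1)).filter (fun n => x ∈ N n)).card := by
      apply Finset.card_le_card_of_injOn pad
      · intro i hi
        simp only [Finset.mem_coe, Finset.mem_range] at hi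
        simp only [Finset.mem_coe, Finset.mem_filter, Finset.mem_range]
        refine ⟨Nat.lt_succ_of_le (hpad.monotone (Nat.le_of_lt_succ hi)), ?_⟩
        simp [hpadN i]
      · exact hpad.injective.injOn
    simpa using this
  exact Nat.le_of_lt_succ (Nat.nth_lt_of_lt_count hcount)

lemma sfun_conv {N : ℕ → Set X}
    (hnet : ∀ (x : X) (U : Set X), IsOpen U → x ∈ U → ∃ n, x ∈ N n ∧ N n ⊆ U)
    (x : X) : ∀ U : Set X, IsOpen U → x ∈ U → ∃ k, TT N (sfun N x) k ⊆ U := by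
  intro U hU hxU
  obtain ⟨n, hxn, hnU⟩ := hnet x U hU hxU
  obtain ⟨k, hk⟩ := sfun_surj x hxn
  refine ⟨k, fun y hy => hnU ?_⟩
  have := TT_subset N (sfun N x) (le_refl k) hy
  rwa [hk] at this

lemma sfun_MP {N : ℕ → Set X} {pad : ℕ → ℕ} (hpad : StrictMono pad)
    (hpadN : ∀ k, N (pad k) = univ)
    (hnet : ∀ (x : X) (U : Set X), IsOpen U → x ∈ U → ∃ n, x ∈ N n ∧ N n ⊆ U)
    (x : X) : MP N (sfun N x) := by
  exact ⟨x, fun k => sfun_mem hpad hpadN x k, sfun_conv hnet x⟩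

/-- The section map into the Michael space. -/
def sM {N : ℕ → Set X} {pad : ℕ → ℕ} (hpad : StrictMono pad)
    (hpadN : ∀ k, N (pad k) = univ)
    (hnet : ∀ (x : X) (U : Set X), IsOpen U → x ∈ U → ∃ n, x ∈ N n ∧ N n ⊆ U)
    (x : X) : Mtype N := ⟨sfun N x, sfun_MP hpad hpadN hnet x⟩

lemma fM_sM [T2Space X] {N : ℕ → Set X} {pad : ℕ → ℕ} (hpad : StrictMono pad)
    (hpadN : ∀ k, N (pad k) = univ)
    (hnet : ∀ (x : X) (U : Set X), IsOpen U → x ∈ U → ∃ n, x ∈ N n ∧ N n ⊆ U)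
    (x : X) : fM (sM hpad hpadN hnet x) = x :=
  MP_unique (sfun_conv hnet x) (fun k => fM_mem (sM hpad hpadN hnet x) k)

lemma sM_closure_compact [T2Space X] [RegularSpace X]
    {N : ℕ → Set X} {pad : ℕ → ℕ} (hpad : StrictMono pad)
    (hpadN : ∀ k, N (pad k) = univ) (hNcl : ∀ n, IsClosed (N n))
    (hnet : ∀ (x : X) (U : Set X), IsOpen U → x ∈ U → ∃ n, x ∈ N n ∧ N n ⊆ U)
    (hkn : ∀ W : Set X, IsOpen W → ∀ L : Set X, IsCompact L → L ⊆ W →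
      ∃ T : Set ℕ, T.Finite ∧ (∀ n ∈ T, N n ⊆ W) ∧ L ⊆ ⋃ n ∈ T, N n)
    {K : Set X} (hK : IsCompact K) :
    IsCompact (closure ((fun x => sM hpad hpadN hnet x) '' K)) := by
  set A := (fun x => sfun N x) '' K with hA
  have hboxeq : {σ : ℕ → ℕ | ∀ k, σ k ≤ pad k} = Set.pi univ (fun k => Iic (pad k)) := by
    ext σ; simp only [Set.mem_pi, Set.mem_Iic, mem_setOf_eq, mem_univ, forall_const]
  have hbox : IsCompact {σ : ℕ → ℕ | ∀ k, σ k ≤ pad k} := by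
    rw [hboxeq]
    exact isCompact_univ_pi (fun k => (Set.finite_Iic (pad k)).isCompact)
  have hAbox : A ⊆ {σ : ℕ → ℕ | ∀ k, σ k ≤ pad k} := by
    rintro - ⟨x, hx, rfl⟩ k
    exact sfun_le hpad hpadN x k
  have hC : IsCompact (closure A) :=
    hbox.of_isClosed_subset isClosed_closure (closure_minimal hAbox hbox.isClosed)
  have hCM : ∀ σ ∈ closure A, MP N σ := fun σ h => closure_MP hNcl hpad hpadN hkn hK h
  have him : Subtype.val '' (closure ((fun x => sM hpad hpadN hnet x) '' K)) = closure A := by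
    apply Subset.antisymm
    · rintro - ⟨τ, hτ, rfl⟩
      have := closure_subtype.1 hτ
      have heq : (Subtype.val '' ((fun x => sM hpad hpadN hnet x) '' K)) = A := by
        exact (image_image _ _ _).trans rfl
      rwa [heq] at this
    · intro σ hσ
      refine ⟨⟨σ, hCM σ hσ⟩, ?_, rfl⟩
      rw [closure_subtype]
      have heq : (Subtype.val '' ((fun x => sM hpad hpadN hnet x) '' K)) = A := by
        exact (image_image _ _ _).trans rfl
      rw [heq]
      exact hσ
  exact Subtype.isCompact_iff.2 (him ▸ hC)

instance (N : ℕ → Set X) : TopologicalSpace.SeparableSpace (Mtype N) := by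
  haveI : SecondCountableTopology (ℕ → ℕ) := UniformSpace.secondCountable_of_separable _
  haveI : SecondCountableTopology (Mtype N) := by
    unfold Mtype; infer_instance
  infer_instance


/-- Compact-regular shrinking. -/
lemma compact_shrink {Y : Type u} [TopologicalSpace Y] [RegularSpace Y]
    {L U : Set Y} (hL : IsCompact L) (hU : IsOpen U) (hLU : L ⊆ U) :
    ∃ V : Set Y, IsOpen V ∧ L ⊆ V ∧ closure V ⊆ U := by
  have hpt : ∀ x : L, ∃ V : Set Y, IsOpen V ∧ (x : Y) ∈ V ∧ closure V ⊆ U := by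
    rintro ⟨x, hx⟩
    obtain ⟨C, hC, hCc, hCU⟩ := exists_mem_nhds_isClosed_subset (hU.mem_nhds (hLU hx))
    exact ⟨interior C, isOpen_interior, mem_interior_iff_mem_nhds.2 hC,
      (closure_minimal interior_subset hCc).trans hCU⟩
  choose V hVo hxV hVU using hpt
  have hcov : L ⊆ ⋃ x : L, V x := fun x hx => mem_iUnion.2 ⟨⟨x, hx⟩, hxV ⟨x, hx⟩⟩
  obtain ⟨t, ht⟩ := hL.elim_finite_subcover V hVo hcov
  refine ⟨⋃ x ∈ t, V x, isOpen_biUnion (fun x _ => hVo x), ht, ?_⟩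
  have hcl : IsClosed (⋃ x ∈ t, closure (V x)) :=
    t.finite_toSet.isClosed_biUnion (fun x _ => isClosed_closure)
  have : closure (⋃ x ∈ t, V x) ⊆ ⋃ x ∈ t, closure (V x) :=
    closure_minimal (iUnion₂_mono fun x _ => subset_closure) hcl
  exact this.trans (iUnion₂_subset fun x _ => hVU x)

/-- Main theorem, direction (1) → (2). -/
theorem one_imp_two {X : Type u} [TopologicalSpace X] [T2Space X] [RegularSpace X]
    (h : ∃ 𝒩 : Set (Set X), 𝒩.Countable ∧
      ∀ U : Set X, IsOpen U → ∀ K : Set X, IsCompact K → K ⊆ U →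
        ∃ 𝓕 ⊆ 𝒩, 𝓕.Finite ∧ K ⊆ ⋃₀ 𝓕 ∧ ⋃₀ 𝓕 ⊆ U) :
    ∃ (M : Type u) (_ : MetricSpace M), TopologicalSpace.SeparableSpace M ∧
      ∃ f : M → X, Continuous f ∧ Function.Surjective f ∧
        ∃ Z : Set M, f '' Z = univ ∧
          ∀ K : Set X, IsCompact K → IsCompact (closure (Z ∩ f ⁻¹' K)) := by
  classical
  obtain ⟨𝒩, h𝒩c, hknet⟩ := h
  set 𝒜 : Set (Set X) := insert univ ((fun A => closure A) '' 𝒩) with h𝒜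
  have h𝒜c : 𝒜.Countable := ((h𝒩c.image _).insert _)
  obtain ⟨g, hg⟩ := h𝒜c.exists_eq_range ⟨univ, mem_insert _ _⟩
  set N : ℕ → Set X := fun n => g (Nat.unpair n).1 with hN
  have hNrange : ∀ n, N n ∈ 𝒜 := fun n => by rw [hg]; exact ⟨(Nat.unpair n).1, rfl⟩
  have hNcl : ∀ n, IsClosed (N n) := by
    intro n
    rcases hNrange n with h | ⟨A, -, hA⟩
    · rw [h]; exact isClosed_univ
    · rw [← hA]; exact isClosed_closure
  obtain ⟨i₀, hi₀⟩ : ∃ i₀, g i₀ = univ := by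
    have : (univ : Set X) ∈ range g := by rw [← hg]; exact mem_insert _ _
    obtain ⟨i, hi⟩ := this; exact ⟨i, hi⟩
  set pad : ℕ → ℕ := fun k => Nat.pair i₀ k with hpaddef
  have hpad : StrictMono pad := fun k l hkl => Nat.pair_lt_pair_right i₀ hkl
  have hpadN : ∀ k, N (pad k) = univ := by
    intro k; simp only [hN, hpaddef, Nat.unpair_pair]; exact hi₀
  have hidx : ∀ A ∈ 𝒜, ∃ n, N n = A := by
    intro A hA
    rw [hg] at hA
    obtain ⟨i, hi⟩ := hA
    exact ⟨Nat.pair i 0, by simp only [hN, Nat.unpair_pair]; exact hi⟩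
  have hkn : ∀ W : Set X, IsOpen W → ∀ L : Set X, IsCompact L → L ⊆ W →
      ∃ T : Set ℕ, T.Finite ∧ (∀ n ∈ T, N n ⊆ W) ∧ L ⊆ ⋃ n ∈ T, N n := by
    intro W hW L hL hLW
    obtain ⟨V, hVo, hLV, hVW⟩ := compact_shrink hL hW hLW
    obtain ⟨𝓕, h𝓕sub, h𝓕fin, h𝓕cov, h𝓕V⟩ := hknet V hVo L hL hLV
    have hφ : ∀ A ∈ 𝓕, ∃ n, N n = closure A := by
      intro A hA
      exact hidx (closure A) (mem_insert_of_mem _ (mem_image_of_mem _ (h𝓕sub hA)))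
    choose! φ hφs using hφ
    refine ⟨φ '' 𝓕, h𝓕fin.image _, ?_, ?_⟩
    · rintro - ⟨A, hA, rfl⟩
      rw [hφs A hA]
      exact (closure_mono (fun y hy => h𝓕V ⟨A, hA, hy⟩)).trans hVW
    · intro x hx
      obtain ⟨A, hA, hxA⟩ := h𝓕cov hx
      exact mem_biUnion (mem_image_of_mem _ hA) (by rw [hφs A hA]; exact subset_closure hxA)
  have hnet : ∀ (x : X) (U : Set X), IsOpen U → x ∈ U → ∃ n, x ∈ N n ∧ N n ⊆ U := by
    intro x U hU hxU
    obtain ⟨T, -, hTW, hTcov⟩ := hkn U hU {x} isCompact_singleton (singleton_subset_iff.2 hxU)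
    obtain ⟨n, hn, hxn⟩ := mem_iUnion₂.1 (hTcov rfl)
    exact ⟨n, hxn, hTW n hn⟩
  -- package via ULift
  refine ⟨ULift.{u} (Mtype N), inferInstance, ?_, ?_⟩
  · -- separable
    haveI : SecondCountableTopology (Mtype N) := by
      haveI : SecondCountableTopology (ℕ → ℕ) := UniformSpace.secondCountable_of_separable _
      unfold Mtype; infer_instance
    haveI : SecondCountableTopology (ULift.{u} (Mtype N)) := by
      have hemb : Topology.IsEmbedding (ULift.down : ULift.{u} (Mtype N) → Mtype N) :=
        (Isometry.isEmbedding (fun x y => rfl))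
      exact hemb.secondCountableTopology
    infer_instance
  · refine ⟨fun σ => fM σ.down, ?_, ?_, ?_⟩
    · exact (fM_continuous N).comp (Isometry.continuous (fun x y => rfl))
    · intro x
      exact ⟨ULift.up (sM hpad hpadN hnet x), fM_sM hpad hpadN hnet x⟩
    · refine ⟨range (fun x => ULift.up (sM hpad hpadN hnet x)), ?_, ?_⟩
      · apply eq_univ_of_forall
        intro x
        exact ⟨ULift.up (sM hpad hpadN hnet x), mem_range_self x, fM_sM hpad hpadN hnet x⟩
      · intro K hK
        have hZK : range (fun x => ULift.up (sM hpad hpadN hnet x)) ∩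
            (fun σ : ULift.{u} (Mtype N) => fM σ.down) ⁻¹' K =
            (fun x => ULift.up (sM hpad hpadN hnet x)) '' K := by
          apply Subset.antisymm
          · rintro σ ⟨⟨x, rfl⟩, hσK⟩
            have : fM (sM hpad hpadN hnet x) ∈ K := hσK
            rw [fM_sM hpad hpadN hnet x] at this
            exact mem_image_of_mem _ this
          · rintro - ⟨x, hx, rfl⟩
            refine ⟨mem_range_self x, ?_⟩
            show fM (sM hpad hpadN hnet x) ∈ K
            rw [fM_sM hpad hpadN hnet x]
            exact hx
        rw [hZK]
        -- transfer compactness along the isometric equivalence ULift.down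
        have hiso : Isometry (ULift.down : ULift.{u} (Mtype N) → Mtype N) := fun x y => rfl
        have hup : Isometry (ULift.up : Mtype N → ULift.{u} (Mtype N)) := fun x y => rfl
        have himg : (fun x => ULift.up (sM hpad hpadN hnet x)) '' K =
            ULift.up '' ((fun x => sM hpad hpadN hnet x) '' K) := by
          rw [← image_comp]; rfl
        rw [himg]
        have hcl : closure (ULift.up '' ((fun x => sM hpad hpadN hnet x) '' K)) =
            ULift.up '' closure ((fun x => sM hpad hpadN hnet x) '' K) := by
          apply Subset.antisymm
          · intro σ hσ
            refine ⟨σ.down, ?_, rfl⟩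
            have : Continuous (ULift.down : ULift.{u} (Mtype N) → Mtype N) := hiso.continuous
            have hh := image_closure_subset_closure_image this (s := ULift.up '' _) (mem_image_of_mem _ hσ)
            rwa [← image_comp, show (ULift.down ∘ (ULift.up : Mtype N → ULift.{u} (Mtype N))) = id from rfl, image_id] at hh
          · exact image_closure_subset_closure_image hup.continuous
        rw [hcl]
        exact (sM_closure_compact hpad hpadN hNcl hnet hkn hK).image hup.continuous


/-- In a T2 space with a countable network, every set meeting each compact set in a finite set
is countable. -/
lemma countable_of_compact_finite {X : Type u} [TopologicalSpace X] [T2Space X]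
    {𝒩 : Set (Set X)} (h𝒩c : 𝒩.Countable)
    (hnet : ∀ U : Set X, IsOpen U → ∀ x ∈ U, ∃ N ∈ 𝒩, x ∈ N ∧ N ⊆ U)
    {A : Set X} (hA : ∀ K : Set X, IsCompact K → (A ∩ K).Finite) : A.Countable := by
  classical
  obtain ⟨g, hg⟩ := (h𝒩c.insert univ).exists_eq_range ⟨univ, mem_insert _ _⟩
  set h : X → (ℕ → ℕ) := fun x n => if x ∈ g n then 1 else 0 with hh
  have hnet' : ∀ (x : X) (U : Set X), IsOpen U → x ∈ U → ∃ n, x ∈ g n ∧ g n ⊆ U := by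
    intro x U hU hxU
    obtain ⟨N, hN𝒩, hxN, hNU⟩ := hnet U hU x hxU
    have : N ∈ range g := by rw [← hg]; exact mem_insert_of_mem _ hN𝒩
    obtain ⟨n, rfl⟩ := this
    exact ⟨n, hxN, hNU⟩
  have hmem_of : ∀ {y : X} {n : ℕ}, h y n = 1 → y ∈ g n := by
    intro y n h1
    by_contra hc
    simp only [hh, if_neg hc] at h1
    exact one_ne_zero h1.symm
  have hinj : Function.Injective h := by
    intro x y hxy
    by_contra hne
    obtain ⟨U, V, hU, hV, hxU, hyV, hUV⟩ := t2_separation hne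
    obtain ⟨n, hxn, hnU⟩ := hnet' x U hU hxU
    have h1 : h x n = 1 := by simp only [hh, if_pos hxn]
    have h2 : h y n = 1 := by rw [← hxy]; exact h1
    exact hUV.le_bot ⟨hnU (hmem_of h2), hyV⟩
  -- every point of h '' A is isolated in h '' A
  have hisol : ∀ x ∈ A, ∃ ε > (0:ℝ), ∀ y ∈ A, dist (h y) (h x) < ε → h y = h x := by
    intro x hxA
    by_contra hc
    push_neg at hc
    have hseq : ∀ k : ℕ, ∃ y, y ∈ A ∧ dist (h y) (h x) < (1/2)^k ∧ h y ≠ h x := by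
      intro k
      obtain ⟨y, hyA, hd, hne⟩ := hc ((1/2)^k) (by positivity)
      exact ⟨y, hyA, hd, hne⟩
    choose y_ hyA hyd hyne using hseq
    have htend : Tendsto y_ atTop (𝓝 x) := by
      rw [tendsto_nhds]
      intro U hU hxU
      obtain ⟨n, hxn, hnU⟩ := hnet' x U hU hxU
      filter_upwards [Filter.eventually_ge_atTop (n+1)] with k hk
      have hdk : dist (h (y_ k)) (h x) < (1/2)^n := by
        refine lt_of_lt_of_le (hyd k) ?_
        apply pow_le_pow_of_le_one (by norm_num) (by norm_num)
        omega
      have hco : h (y_ k) n = h x n := PiNat.apply_eq_of_dist_lt hdk le_rfl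
      have h1 : h x n = 1 := by simp only [hh, if_pos hxn]
      exact hnU (hmem_of (by rw [hco, h1]))
    have hK : IsCompact (insert x (range y_)) := htend.isCompact_insert_range
    have hfin : (range y_).Finite := by
      refine (hA _ hK).subset ?_
      rintro - ⟨k, rfl⟩
      exact ⟨hyA k, Or.inr (mem_range_self k)⟩
    haveI := hfin.to_subtype
    obtain ⟨b, hb⟩ := Finite.exists_infinite_fiber
      (fun k : ℕ => (⟨y_ k, mem_range_self k⟩ : range y_))
    have hbinf : {k : ℕ | y_ k = (b : X)}.Infinite := by
      have h1 : ((fun k : ℕ => (⟨y_ k, mem_range_self k⟩ : range y_)) ⁻¹' {b}).Infinite :=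
        Set.infinite_coe_iff.1 hb
      refine h1.mono ?_
      intro k hk
      simp only [mem_preimage, mem_singleton_iff] at hk
      exact congrArg Subtype.val hk
    have hdist0 : dist (h (b : X)) (h x) = 0 := by
      by_contra hd0
      have hpos : 0 < dist (h (b : X)) (h x) := lt_of_le_of_ne dist_nonneg (Ne.symm hd0)
      obtain ⟨m, hm⟩ := exists_pow_lt_of_lt_one hpos (by norm_num : (1/2 : ℝ) < 1)
      obtain ⟨k, hk, hkm⟩ := hbinf.exists_gt m
      have : dist (h (y_ k)) (h x) < (1/2)^m := by
        refine lt_of_lt_of_le (hyd k) ?_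
        apply pow_le_pow_of_le_one (by norm_num) (by norm_num)
        omega
      rw [hk] at this
      exact absurd (this.trans hm) (lt_irrefl _)
    have : h (b : X) = h x := by
      rwa [dist_eq_zero] at hdist0
    obtain ⟨k, hk, -⟩ := hbinf.exists_gt 0
    exact hyne k (by rw [hk]; exact this)
  -- conclude countability
  haveI : SecondCountableTopology (ℕ → ℕ) := UniformSpace.secondCountable_of_separable _
  obtain ⟨ℬ, hℬc, -, hℬ⟩ := TopologicalSpace.exists_countable_basis (ℕ → ℕ)
  have hchoice : ∀ x ∈ A, ∃ b ∈ ℬ, h x ∈ b ∧ ∀ y ∈ A, h y ∈ b → h y = h x := by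
    intro x hx
    obtain ⟨ε, hε, hiso⟩ := hisol x hx
    obtain ⟨b, hbℬ, hxb, hbsub⟩ :=
      hℬ.exists_subset_of_mem_open (Metric.mem_ball_self hε) Metric.isOpen_ball
    refine ⟨b, hbℬ, hxb, fun y hy hyb => hiso y hy ?_⟩
    have := hbsub hyb
    rwa [Metric.mem_ball] at this
  choose! φ hφℬ hφmem hφiso using hchoice
  have hinjA : InjOn φ A := by
    intro x hx x' hx' he
    apply hinj
    exact (hφiso x hx x' hx' (by rw [he]; exact hφmem x' hx')).symm
  exact MapsTo.countable_of_injOn (fun x hx => hφℬ x hx) hinjA hℬc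

section ThreeTwo

theorem three_imp_two {X : Type u} [TopologicalSpace X] [T2Space X]
    (M : Type u) (hM : MetricSpace M) (f : M → X) (s : X → M)
    (hf : Continuous f) (hsf : ∀ x, f (s x) = x)
    (hcpt : ∀ K : Set X, IsCompact K → IsCompact (closure (s '' K)))
    {𝒩 : Set (Set X)} (h𝒩c : 𝒩.Countable)
    (hnet : ∀ U : Set X, IsOpen U → ∀ x ∈ U, ∃ N ∈ 𝒩, x ∈ N ∧ N ⊆ U) :
    ∃ (M' : Type u) (_ : MetricSpace M'), TopologicalSpace.SeparableSpace M' ∧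
      ∃ f' : M' → X, Continuous f' ∧ Function.Surjective f' ∧
        ∃ Z : Set M', f' '' Z = univ ∧
          ∀ K : Set X, IsCompact K → IsCompact (closure (Z ∩ f' ⁻¹' K)) := by
  classical
  have hsinj : Function.Injective s := fun x y hxy => by rw [← hsf x, ← hsf y, hxy]
  -- Step 1: maximal q-separated subsets of `range s` are countable
  have hqsep : ∀ q : ℝ, 0 < q → ∃ D : Set M, D.Countable ∧ D ⊆ range s ∧
      ∀ y ∈ range s, ∃ d ∈ D, dist y d < q := by
    intro q hq
    set Sep : Set (Set M) := {D | D ⊆ range s ∧ ∀ a ∈ D, ∀ b ∈ D, a ≠ b → q ≤ dist a b}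
      with hSep
    obtain ⟨D, hDmax⟩ := zorn_subset Sep (by
      intro c hcS hchain
      refine ⟨⋃₀ c, ⟨?_, ?_⟩, fun t ht => subset_sUnion_of_mem ht⟩
      · exact sUnion_subset (fun t ht => (hcS ht).1)
      · intro a ha b hb hab
        obtain ⟨ta, hta, hat⟩ := ha
        obtain ⟨tb, htb, hbt⟩ := hb
        rcases hchain.total hta htb with hsub | hsub
        · exact (hcS htb).2 a (hsub hat) b hbt hab
        · exact (hcS hta).2 a hat b (hsub hbt) hab)
    have hDS : D ∈ Sep := hDmax.prop
    -- D is countable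
    have hDcnt : D.Countable := by
      set A : Set X := {x | s x ∈ D} with hA
      have hAfin : ∀ K : Set X, IsCompact K → (A ∩ K).Finite := by
        intro K hK
        have hDK : (D ∩ s '' K).Finite := by
          have htb : TotallyBounded (s '' K) :=
            (hcpt K hK).totallyBounded.subset subset_closure
          obtain ⟨t, htfin, htcov⟩ := Metric.totallyBounded_iff.1 htb (q/2) (by positivity)
          have hch : ∀ d ∈ D ∩ s '' K, ∃ c ∈ t, d ∈ Metric.ball c (q/2) := by
            intro d hd
            have := htcov hd.2
            simpa using this
          choose! c hc1 hc2 using hch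
          have himg : (c '' (D ∩ s '' K)).Finite := htfin.subset (by
            rintro - ⟨d, hd, rfl⟩; exact hc1 d hd)
          refine himg.of_finite_image ?_
          intro d hd d' hd' he
          by_contra hne
          have h1 := hc2 d hd
          have h2 := hc2 d' hd'
          rw [he] at h1
          have : dist d d' < q := by
            calc dist d d' ≤ dist d (c d') + dist (c d') d' := dist_triangle _ _ _
            _ < q/2 + q/2 := by
                refine add_lt_add ?_ ?_
                · rw [← Metric.mem_ball]; exact h1
                · rw [dist_comm, ← Metric.mem_ball]; exact h2
            _ = q := by ring
          exact absurd (hDS.2 d hd.1 d' hd'.1 hne) (not_le.2 this)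
        have hsub : s '' (A ∩ K) ⊆ D ∩ s '' K := by
          rintro - ⟨x, ⟨hxA, hxK⟩, rfl⟩
          exact ⟨hxA, mem_image_of_mem s hxK⟩
        exact ((hDK.subset hsub).of_finite_image (hsinj.injOn)).subset (by rfl)
      have := countable_of_compact_finite h𝒩c hnet hAfin
      have hDA : D = s '' A := by
        apply Subset.antisymm
        · intro d hd
          obtain ⟨x, rfl⟩ := hDS.1 hd
          exact mem_image_of_mem s hd
        · rintro - ⟨x, hx, rfl⟩
          exact hx
      rw [hDA]
      exact this.image s
    refine ⟨D, hDcnt, hDS.1, ?_⟩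
    intro y hy
    by_cases hyD : y ∈ D
    · exact ⟨y, hyD, by simpa using hq⟩
    · by_contra hc
      push_neg at hc
      have hins : insert y D ∈ Sep := by
        constructor
        · exact insert_subset hy hDS.1
        · intro a ha b hb hab
          rcases ha with rfl | haD
          · rcases hb with rfl | hbD
            · exact absurd rfl hab
            · exact hc b hbD
          · rcases hb with rfl | hbD
            · rw [dist_comm]; exact hc a haD
            · exact hDS.2 a haD b hbD hab
      have := hDmax.2 hins (subset_insert y D)
      exact hyD (this (mem_insert y D))
  -- Step 2: range s is separable
  have hsep : IsSeparable (range s) := by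
    have hch : ∀ n : ℕ, ∃ D : Set M, D.Countable ∧ D ⊆ range s ∧
        ∀ y ∈ range s, ∃ d ∈ D, dist y d < 1/(n+1) := by
      intro n
      exact hqsep (1/(n+1)) (by positivity)
    choose Ds hDc hDsub hDd using hch
    refine ⟨⋃ n, Ds n, countable_iUnion hDc, ?_⟩
    intro y hy
    rw [Metric.mem_closure_iff]
    intro ε hε
    obtain ⟨n, hn⟩ := exists_nat_one_div_lt hε
    obtain ⟨d, hd, hdist⟩ := hDd n y hy
    exact ⟨d, mem_iUnion.2 ⟨n, hd⟩, hdist.trans hn⟩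
  -- Step 3: package
  set C := closure (range s) with hC
  haveI : TopologicalSpace.SeparableSpace ↥C := (hsep.closure).separableSpace
  set s' : X → ↥C := fun x => ⟨s x, subset_closure (mem_range_self x)⟩ with hs'
  refine ⟨↥C, inferInstance, inferInstance, fun m => f m.val,
    hf.comp continuous_subtype_val, ?_, range s', ?_, ?_⟩
  · intro x
    exact ⟨s' x, hsf x⟩
  · apply eq_univ_of_forall
    intro x
    exact ⟨s' x, mem_range_self x, hsf x⟩
  · intro K hK
    have hZK : range s' ∩ (fun m : ↥C => f m.val) ⁻¹' K = s' '' K := by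
      apply Subset.antisymm
      · rintro m ⟨⟨x, rfl⟩, hmK⟩
        have : f (s x) ∈ K := hmK
        rw [hsf x] at this
        exact mem_image_of_mem _ this
      · rintro - ⟨x, hx, rfl⟩
        refine ⟨mem_range_self x, ?_⟩
        show f (s x) ∈ K
        rw [hsf x]
        exact hx
    rw [hZK]
    have hval : Subtype.val '' (closure (s' '' K)) = closure (s '' K) := by
      apply Subset.antisymm
      · have h1 := image_closure_subset_closure_image
          (continuous_subtype_val (p := fun m => m ∈ C)) (s := s' '' K)
        have h2 : Subtype.val '' (s' '' K) = s '' K := by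
          rw [← image_comp]; rfl
        rwa [h2] at h1
      · intro m hm
        have hmC : m ∈ C := by
          refine closure_mono ?_ hm
          rintro - ⟨x, hx, rfl⟩
          exact mem_range_self x
        refine ⟨⟨m, hmC⟩, ?_, rfl⟩
        rw [closure_subtype]
        have h2 : Subtype.val '' (s' '' K) = s '' K := by
          rw [← image_comp]; rfl
        rw [h2]
        exact hm
    exact Subtype.isCompact_iff.2 (hval ▸ hcpt K hK)

end ThreeTwo


theorem two_imp_one {X : Type u} [TopologicalSpace X] [T2Space X]
    (h : IsSubproperImage X) : HasCountableKNetwork X := by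
  obtain ⟨M, _, hsep, f, hf, hfs, Z, hZ, hcpt⟩ := h
  haveI := hsep
  haveI : SecondCountableTopology M := UniformSpace.secondCountable_of_separable M
  obtain ⟨B, hBc, -, hB⟩ := TopologicalSpace.exists_countable_basis M
  refine ⟨(fun b => f '' b) '' B, hBc.image _, ?_⟩
  intro U hU K hK hKU
  have hCc : IsCompact (closure (Z ∩ f ⁻¹' K)) := hcpt K hK
  set C := closure (Z ∩ f ⁻¹' K) with hC
  have hCU : C ⊆ f ⁻¹' U := by
    intro c hc
    have : f c ∈ closure (f '' (Z ∩ f ⁻¹' K)) := by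
      have := image_closure_subset_closure_image hf (s := Z ∩ f ⁻¹' K)
      exact this (mem_image_of_mem f hc)
    have himK : f '' (Z ∩ f ⁻¹' K) ⊆ K := by
      rintro - ⟨z, ⟨-, hz2⟩, rfl⟩; exact hz2
    have : f c ∈ K := by
      have hKcl : IsClosed K := hK.isClosed
      exact (closure_minimal himK hKcl) this
    exact hKU this
  -- cover C by basis elements included in f ⁻¹' U
  have hcov : C ⊆ ⋃ b ∈ {b ∈ B | b ⊆ f ⁻¹' U}, b := by
    intro c hc
    obtain ⟨b, hbB, hcb, hbU⟩ := hB.exists_subset_of_mem_open (hCU hc) (hU.preimage hf)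
    exact mem_biUnion ⟨hbB, hbU⟩ hcb
  obtain ⟨b', hb'sub, hb'fin, hb'cov⟩ := hCc.elim_finite_subcover_image
    (fun b hb => hB.isOpen hb.1) hcov
  refine ⟨(fun b => f '' b) '' b', ?_, hb'fin.image _, ?_, ?_⟩
  · exact image_mono (fun b hb => (hb'sub hb).1)
  · -- K ⊆ ⋃₀
    intro x hx
    obtain ⟨z, hzZ, hzx⟩ : ∃ z ∈ Z, f z = x := by
      have : x ∈ f '' Z := by rw [hZ]; trivial
      obtain ⟨z, hz, hzx⟩ := this; exact ⟨z, hz, hzx⟩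
    have hzC : z ∈ C := subset_closure ⟨hzZ, by simp [hzx, hx]⟩
    obtain ⟨b, hb, hzb⟩ := mem_iUnion₂.1 (hb'cov hzC)
    exact ⟨f '' b, mem_image_of_mem _ hb, ⟨z, hzb, hzx⟩⟩
  · rintro - ⟨-, ⟨b, hb, rfl⟩, y, hyb, rfl⟩
    exact (hb'sub hb).2 hyb

theorem two_imp_three {X : Type u} [TopologicalSpace X] [T2Space X]
    (h : IsSubproperImage X) :
    KStarMetrizable X ∧ HasCountableNetwork X := by
  obtain ⟨M, hM, hsep, f, hf, hfs, Z, hZ, hcpt⟩ := h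
  constructor
  · -- choose a section into Z
    have hsec : ∀ x : X, ∃ z, z ∈ Z ∧ f z = x := by
      intro x
      have : x ∈ f '' Z := by rw [hZ]; trivial
      obtain ⟨z, hz, hzx⟩ := this; exact ⟨z, hz, hzx⟩
    choose s hsZ hsf using hsec
    refine ⟨M, hM, f, s, hf, hfs, hsf, ?_⟩
    intro K hK
    have hsub : s '' K ⊆ Z ∩ f ⁻¹' K := by
      rintro - ⟨x, hx, rfl⟩
      exact ⟨hsZ x, by simp [hsf x, hx]⟩
    exact (hcpt K hK).of_isClosed_subset isClosed_closure
      (closure_mono hsub)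
  · haveI := hsep
    haveI : SecondCountableTopology M := UniformSpace.secondCountable_of_separable M
    obtain ⟨B, hBc, -, hB⟩ := TopologicalSpace.exists_countable_basis M
    refine ⟨(fun b => f '' b) '' B, hBc.image _, ?_⟩
    intro U hU x hx
    obtain ⟨z, hzx⟩ := hfs x
    have hzU : z ∈ f ⁻¹' U := by simp [hzx, hx]
    obtain ⟨b, hbB, hzb, hbU⟩ := hB.exists_subset_of_mem_open hzU (hU.preimage hf)
    exact ⟨f '' b, mem_image_of_mem _ hbB, ⟨z, hzb, hzx⟩,
      by rintro - ⟨y, hy, rfl⟩; exact hbU hy⟩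

end Aleph0
end

/-- For a regular Hausdorff space `X` the following are equivalent:
(1) `X` has a countable k-network (`X` is an ℵ₀-space);
(2) `X` is the image of a separable metrizable space under a subproper map;
(3) `X` is k*-metrizable and has a countable network. -/
theorem stmt_12 {X : Type u} [TopologicalSpace X] [T2Space X] [RegularSpace X] :
    List.TFAE
      [ -- (1) countable k-network
        ∃ 𝒩 : Set (Set X), 𝒩.Countable ∧
          ∀ U : Set X, IsOpen U → ∀ K : Set X, IsCompact K → K ⊆ U →
            ∃ 𝓕 ⊆ 𝒩, 𝓕.Finite ∧ K ⊆ ⋃₀ 𝓕 ∧ ⋃₀ 𝓕 ⊆ U,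
        -- (2) image of a separable metrizable space under a subproper map
        ∃ (M : Type u) (_ : MetricSpace M), TopologicalSpace.SeparableSpace M ∧
          ∃ f : M → X, Continuous f ∧ Function.Surjective f ∧
            ∃ Z : Set M, f '' Z = univ ∧
              ∀ K : Set X, IsCompact K → IsCompact (closure (Z ∩ f ⁻¹' K)),
        -- (3) k*-metrizable with a countable network
        KStarMetrizable X ∧ ∃ 𝒩 : Set (Set X), 𝒩.Countable ∧
          ∀ U : Set X, IsOpen U → ∀ x ∈ U, ∃ N ∈ 𝒩, x ∈ N ∧ N ⊆ U ] := by
  tfae_have 1 → 2 := fun h => Aleph0.one_imp_two h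
  tfae_have 2 → 1 := fun h => Aleph0.two_imp_one h
  tfae_have 2 → 3 := fun h => Aleph0.two_imp_three h
  tfae_have 3 → 2 := by
    rintro ⟨⟨M, hM, f, s, hf, hfs, hsf, hcpt⟩, N2, hN2c, hnet⟩
    exact Aleph0.three_imp_two M hM f s hf hsf hcpt hN2c hnet
  tfae_finish
end

section
/- Let f : X → Y be a continuous surjection between completely regular Hausdorff (Tychonoff) spaces admitting a section s : Y → X that preserves precompact sets. Then there is a function l assigning to each Radon probability measure μ on Y a Radon probability measure l(μ) on X such that the pushforward of l(μ) under f equals μ and l(μ)(cl(s(K))) = μ(K) for every compact set K ⊆ Y, where cl denotes closure in X. -/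
open Filter Topology Set MeasureTheory

universe u v

/-- A Radon probability measure: a Borel probability measure which is inner regular
with respect to compact sets on all Borel (measurable) sets. -/
def IsRadonProb {X : Type*} [TopologicalSpace X] [MeasurableSpace X]
    (μ : Measure X) : Prop :=
  IsProbabilityMeasure μ ∧
    ∀ B : Set X, MeasurableSet B →
      μ B = ⨆ (K : Set X) (_ : K ⊆ B) (_ : IsCompact K), μ K

open scoped NNReal ENNReal

universe w

lemma exists_functional {Y : Type v} [MeasurableSpace Y] (μ : Measure Y) [IsProbabilityMeasure μ]
    {W : Type w} [TopologicalSpace W] [CompactSpace W] (w : Y → W) :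
    ∃ Φ : C(W, ℝ) →ₗ[ℝ] ℝ,
      (∀ g₁ g₂ : C(W, ℝ), (∀ z, g₁ z ≤ g₂ z) → Φ g₁ ≤ Φ g₂) ∧
      Φ 1 = 1 ∧
      ∀ (A : Set Y), MeasurableSet A → ∀ g : C(W, ℝ), (∀ z, 0 ≤ g z) → (∀ z, g z ≤ 1) →
        (∀ y ∈ A, 1 ≤ g (w y)) → (μ A).toReal ≤ Φ g := by
  classical
  set Fe : C(W, ℝ) → Set (Y → ℝ) :=
    fun g => {u | Measurable u ∧ Integrable u μ ∧ ∀ y, g (w y) ≤ u y} with hFe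
  set p : C(W, ℝ) → ℝ := fun g => sInf ((fun u => ∫ y, u y ∂μ) '' Fe g) with hp
  have hbound : ∀ (g : C(W, ℝ)) (y : Y), g (w y) ≤ ‖g‖ := fun g y =>
    (le_abs_self _).trans (by simpa [Real.norm_eq_abs] using g.norm_coe_le_norm (w y))
  have hbound' : ∀ (g : C(W, ℝ)) (y : Y), -‖g‖ ≤ g (w y) := fun g y => by
    have := (abs_le.mp ((Real.norm_eq_abs _ ▸ g.norm_coe_le_norm (w y)))).1
    linarith
  have hne : ∀ g, ((fun u => ∫ y, u y ∂μ) '' Fe g).Nonempty := fun g =>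
    ⟨_, ⟨fun _ => ‖g‖, ⟨measurable_const, integrable_const _, fun y => hbound g y⟩, rfl⟩⟩
  have hlb : ∀ g, ∀ t ∈ (fun u => ∫ y, u y ∂μ) '' Fe g, -‖g‖ ≤ t := by
    rintro g _ ⟨u, ⟨hum, hui, hule⟩, rfl⟩
    calc -‖g‖ = ∫ _, -‖g‖ ∂μ := by simp
    _ ≤ ∫ y, u y ∂μ :=
      integral_mono (integrable_const _) hui (fun y => (hbound' g y).trans (hule y))
  have hbdd : ∀ g, BddBelow ((fun u => ∫ y, u y ∂μ) '' Fe g) := fun g => ⟨-‖g‖, hlb g⟩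
  have p_le : ∀ (g) (u), u ∈ Fe g → p g ≤ ∫ y, u y ∂μ := fun g u hu => csInf_le (hbdd g) ⟨u, hu, rfl⟩
  have le_p : ∀ (g) (c : ℝ), (∀ u ∈ Fe g, c ≤ ∫ y, u y ∂μ) → c ≤ p g := fun g c h =>
    le_csInf (hne g) (by rintro t ⟨u, hu, rfl⟩; exact h u hu)
  have p_lb : ∀ g, -‖g‖ ≤ p g := fun g => le_csInf (hne g) (hlb g)
  have p_add : ∀ g₁ g₂, p (g₁ + g₂) ≤ p g₁ + p g₂ := by
    intro g₁ g₂
    refine le_of_forall_pos_le_add fun ε hε => ?_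
    obtain ⟨t₁, ⟨u₁, hu₁, rfl⟩, hlt₁⟩ :=
      exists_lt_of_csInf_lt (hne g₁) (show p g₁ < p g₁ + ε / 2 by linarith)
    obtain ⟨t₂, ⟨u₂, hu₂, rfl⟩, hlt₂⟩ :=
      exists_lt_of_csInf_lt (hne g₂) (show p g₂ < p g₂ + ε / 2 by linarith)
    have hu : (u₁ + u₂) ∈ Fe (g₁ + g₂) := by
      refine ⟨hu₁.1.add hu₂.1, hu₁.2.1.add hu₂.2.1, fun y => ?_⟩
      have h1 := hu₁.2.2 y; have h2 := hu₂.2.2 y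
      simp only [ContinuousMap.add_apply, Pi.add_apply]; linarith
    have hple := p_le _ _ hu
    simp only [Pi.add_apply] at hple
    rw [integral_add hu₁.2.1 hu₂.2.1] at hple
    simp only at hlt₁ hlt₂
    linarith
  have p_smul_le : ∀ (c : ℝ), 0 < c → ∀ g, p (c • g) ≤ c * p g := by
    intro c hc g
    refine le_of_forall_pos_le_add fun ε hε => ?_
    obtain ⟨t, ⟨u, hu, rfl⟩, hlt⟩ :=
      exists_lt_of_csInf_lt (hne g) (show p g < p g + ε / c by have := div_pos hε hc; linarith)
    have hcu : (fun y => c * u y) ∈ Fe (c • g) := by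
      refine ⟨hu.1.const_mul c, hu.2.1.const_mul c, fun y => ?_⟩
      simp only [ContinuousMap.smul_apply, smul_eq_mul]
      exact mul_le_mul_of_nonneg_left (hu.2.2 y) hc.le
    have h := p_le _ _ hcu
    rw [integral_const_mul] at h
    simp only at hlt
    have : c * ∫ y, u y ∂μ ≤ c * (p g + ε / c) :=
      mul_le_mul_of_nonneg_left hlt.le hc.le
    rw [mul_add, mul_div_cancel₀ _ hc.ne'] at this
    linarith
  have p_smul : ∀ (c : ℝ), 0 < c → ∀ g, p (c • g) = c * p g := by
    intro c hc g
    refine le_antisymm (p_smul_le c hc g) ?_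
    have h2 := p_smul_le c⁻¹ (inv_pos.mpr hc) (c • g)
    rw [smul_smul, inv_mul_cancel₀ hc.ne', one_smul] at h2
    have := mul_le_mul_of_nonneg_left h2 hc.le
    rw [← mul_assoc, mul_inv_cancel₀ hc.ne', one_mul] at this
    linarith
  obtain ⟨Φ, -, hΦle⟩ :=
    exists_extension_of_le_sublinear ⟨(⊥ : Submodule ℝ C(W, ℝ)), 0⟩ p p_smul p_add (by
      rintro ⟨x, hx⟩
      have hx0 : x = 0 := (Submodule.mem_bot ℝ).mp hx
      subst hx0
      have : (0:ℝ) ≤ p 0 := by simpa using p_lb 0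
      simpa using this)
  have Φmono : ∀ g₁ g₂ : C(W, ℝ), (∀ z, g₁ z ≤ g₂ z) → Φ g₁ ≤ Φ g₂ := by
    intro g₁ g₂ h
    have h1 : Φ (g₁ - g₂) ≤ p (g₁ - g₂) := hΦle _
    have h0 : (fun _ => (0:ℝ)) ∈ Fe (g₁ - g₂) := by
      refine ⟨measurable_const, integrable_const 0, fun y => ?_⟩
      simp only [ContinuousMap.sub_apply]
      linarith [h (w y)]
    have h2 : p (g₁ - g₂) ≤ 0 := by simpa using p_le _ _ h0
    have h3 : Φ g₁ - Φ g₂ ≤ 0 := by rw [← map_sub]; linarith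
    linarith
  have const_mem : ∀ (c : ℝ) (g : C(W,ℝ)), (∀ y, g (w y) ≤ c) → (fun _ => c) ∈ Fe g :=
    fun c g hc => ⟨measurable_const, integrable_const c, hc⟩
  have int_const : ∀ c : ℝ, (∫ _, c ∂μ) = c := fun c => by simp
  have Φone : Φ 1 = 1 := by
    have h1 : Φ 1 ≤ 1 := by
      have := (hΦle 1).trans ((p_le 1 _ (const_mem 1 1 (fun y => by simp))).trans_eq (int_const 1))
      simpa using this
    have h2 : Φ (-1) ≤ -1 :=
      (hΦle (-1)).trans ((p_le (-1) _ (const_mem (-1) (-1) (fun y => by simp))).trans_eq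
        (int_const (-1)))
    rw [map_neg] at h2
    linarith
  refine ⟨Φ, Φmono, Φone, ?_⟩
  intro A hA g g0 g1 hg
  have hind : (Aᶜ.indicator (fun _ => (1:ℝ))) ∈ Fe (1 - g) := by
    refine ⟨measurable_const.indicator hA.compl, (integrable_const (1:ℝ)).indicator hA.compl,
      fun y => ?_⟩
    by_cases hy : y ∈ A
    · have : Aᶜ.indicator (fun _ => (1:ℝ)) y = 0 := indicator_of_notMem (by simpa using hy) _
      rw [this]
      simp only [ContinuousMap.sub_apply, ContinuousMap.one_apply]
      linarith [hg y hy]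
    · have : Aᶜ.indicator (fun _ => (1:ℝ)) y = 1 := indicator_of_mem (by simpa using hy) _
      rw [this]
      simp only [ContinuousMap.sub_apply, ContinuousMap.one_apply]
      linarith [g0 (w y)]
  have hp1 : p (1 - g) ≤ (μ Aᶜ).toReal := by
    have := p_le _ _ hind
    rwa [integral_indicator_const (1:ℝ) hA.compl, smul_eq_mul, mul_one] at this
  have hΦ1g : Φ (1 - g) ≤ (μ Aᶜ).toReal := (hΦle _).trans hp1
  rw [map_sub, Φone] at hΦ1g
  have hAc : (μ Aᶜ).toReal = 1 - (μ A).toReal := by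
    rw [prob_compl_eq_one_sub hA, ENNReal.toReal_sub_of_le prob_le_one ENNReal.one_ne_top]
    simp
  linarith
set_option maxHeartbeats 1000000 in
set_option synthInstance.maxHeartbeats 200000 in
open unitInterval in
lemma key {X : Type u} {Y : Type v} [TopologicalSpace X] [TopologicalSpace Y]
    [T2Space X] [T2Space Y] [CompletelyRegularSpace X]
    [MeasurableSpace X] [BorelSpace X] [MeasurableSpace Y] [BorelSpace Y]
    (f : X → Y) (hf : Continuous f)
    (s : Y → X) (hsec : ∀ y, f (s y) = y)
    (hs : ∀ K : Set Y, IsCompact K → IsCompact (closure (s '' K)))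
    (μ : Measure Y) (hμ : IsRadonProb μ) :
    ∃ ν : Measure X, IsRadonProb ν ∧ Measure.map f ν = μ ∧
      ∀ K : Set Y, IsCompact K → ν (closure (s '' K)) = μ K := by
  classical
  haveI : IsProbabilityMeasure μ := hμ.1
  haveI : T35Space X := {}
  -- the compactification
  let Z : Type u := C(X, I) → I
  borelize Z
  let e : X → Z := fun x g => g x
  have he : Continuous e := continuous_pi fun g => g.continuous
  have einj : Function.Injective e := by
    intro a b hab
    by_contra hne
    obtain ⟨g, gc, hg⟩ := separatesPoints_continuous_of_t35Space_Icc hne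
    exact hg (congrFun hab ⟨g, gc⟩)
  -- the functional
  obtain ⟨Φ, Φmono, Φone, Φcomp⟩ := exists_functional μ (fun y => e (s y))
  have Φnonneg : ∀ g : C(Z, ℝ), (∀ z, 0 ≤ g z) → 0 ≤ Φ g := fun g hg => by
    have := Φmono 0 g (by simpa using hg)
    simpa using this
  have Φle1 : ∀ g : C(Z, ℝ), (∀ z, g z ≤ 1) → Φ g ≤ 1 := fun g hg =>
    Φone ▸ Φmono g 1 (by simpa using hg)
  -- the content
  let F : Set Z → Set C(Z, ℝ) :=
    fun C => {g | (∀ z, 0 ≤ g z) ∧ (∀ z, g z ≤ 1) ∧ ∀ z ∈ C, 1 ≤ g z}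
  let lam : Set Z → ℝ := fun C => sInf (Φ '' F C)
  have hone_mem : ∀ C, (1 : C(Z, ℝ)) ∈ F C :=
    fun C => ⟨fun z => by simp, fun z => by simp, fun z _ => by simp⟩
  have hFne : ∀ C, (Φ '' F C).Nonempty := fun C => ⟨Φ 1, ⟨1, hone_mem C, rfl⟩⟩
  have hFbdd : ∀ C, BddBelow (Φ '' F C) := fun C =>
    ⟨0, by rintro t ⟨g, hg, rfl⟩; exact Φnonneg g hg.1⟩
  have lam_le : ∀ C, ∀ g ∈ F C, lam C ≤ Φ g := fun C g hg => csInf_le (hFbdd C) ⟨g, hg, rfl⟩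
  have le_lam : ∀ (C) (c : ℝ), (∀ g ∈ F C, c ≤ Φ g) → c ≤ lam C := fun C c h =>
    le_csInf (hFne C) (by rintro t ⟨g, hg, rfl⟩; exact h g hg)
  have lam_nonneg : ∀ C, 0 ≤ lam C := fun C => le_lam C 0 fun g hg => Φnonneg g hg.1
  have lam_le_one : ∀ C, lam C ≤ 1 := fun C => (lam_le C 1 (hone_mem C)).trans Φone.le
  have lam_mono : ∀ C₁ C₂ : Set Z, C₁ ⊆ C₂ → lam C₁ ≤ lam C₂ := by
    intro C₁ C₂ h
    exact csInf_le_csInf (hFbdd C₁) (hFne C₂)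
      (image_mono (fun g hg => ⟨hg.1, hg.2.1, fun z hz => hg.2.2 z (h hz)⟩))
  have lam_subadd : ∀ C₁ C₂ : Set Z, lam (C₁ ∪ C₂) ≤ lam C₁ + lam C₂ := by
    intro C₁ C₂
    refine le_of_forall_pos_le_add fun ε hε => ?_
    obtain ⟨t₁, ⟨g₁, hg₁, rfl⟩, hlt₁⟩ :=
      exists_lt_of_csInf_lt (hFne C₁) (show lam C₁ < lam C₁ + ε / 2 by linarith)
    obtain ⟨t₂, ⟨g₂, hg₂, rfl⟩, hlt₂⟩ :=
      exists_lt_of_csInf_lt (hFne C₂) (show lam C₂ < lam C₂ + ε / 2 by linarith)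
    let gm : C(Z, ℝ) := ⟨fun z => min (g₁ z + g₂ z) 1,
      Continuous.min (g₁.continuous.add g₂.continuous) continuous_const⟩
    have hgm : gm ∈ F (C₁ ∪ C₂) := by
      refine ⟨fun z => le_min (add_nonneg (hg₁.1 z) (hg₂.1 z)) zero_le_one,
        fun z => min_le_right _ _, fun z hz => ?_⟩
      rcases hz with hz | hz
      · exact le_min (by linarith [hg₁.2.2 z hz, hg₂.1 z]) le_rfl
      · exact le_min (by linarith [hg₂.2.2 z hz, hg₁.1 z]) le_rfl
    have h1 : Φ gm ≤ Φ g₁ + Φ g₂ := by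
      have := Φmono gm (g₁ + g₂) (fun z => by
        simp only [ContinuousMap.add_apply]
        exact min_le_left _ _)
      rwa [map_add] at this
    have := lam_le _ gm hgm
    linarith
  have lam_superadd : ∀ C₁ C₂ : Set Z, IsClosed C₁ → IsClosed C₂ → Disjoint C₁ C₂ →
      lam C₁ + lam C₂ ≤ lam (C₁ ∪ C₂) := by
    intro C₁ C₂ hc₁ hc₂ hd
    obtain ⟨h, hh0, hh1, hhI⟩ := exists_continuous_zero_one_of_isClosed hc₁ hc₂ hd
    refine le_lam _ _ fun g hg => ?_
    have hg1 : g * (1 - h) ∈ F C₁ := by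
      refine ⟨fun z => mul_nonneg (hg.1 z) (by simp [(hhI z).2]),
        fun z => ?_, fun z hz => ?_⟩
      · simp only [ContinuousMap.mul_apply, ContinuousMap.sub_apply, ContinuousMap.one_apply]
        have := (hhI z).1; have := (hhI z).2; have := hg.1 z; have := hg.2.1 z
        nlinarith
      · have h0 : h z = 0 := hh0 hz
        simp only [ContinuousMap.mul_apply, ContinuousMap.sub_apply, ContinuousMap.one_apply, h0]
        simpa using hg.2.2 z (Or.inl hz)
    have hg2 : g * h ∈ F C₂ := by
      refine ⟨fun z => mul_nonneg (hg.1 z) (hhI z).1, fun z => ?_, fun z hz => ?_⟩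
      · simp only [ContinuousMap.mul_apply]
        have := (hhI z).1; have := (hhI z).2; have := hg.1 z; have := hg.2.1 z
        nlinarith
      · have h1 : h z = 1 := hh1 hz
        simp only [ContinuousMap.mul_apply, h1, mul_one]
        exact hg.2.2 z (Or.inr hz)
    have hsum : g * (1 - h) + g * h = g := by
      ext z
      simp only [ContinuousMap.add_apply, ContinuousMap.mul_apply, ContinuousMap.sub_apply,
        ContinuousMap.one_apply]
      ring
    calc lam C₁ + lam C₂ ≤ Φ (g * (1 - h)) + Φ (g * h) :=
          add_le_add (lam_le _ _ hg1) (lam_le _ _ hg2)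
    _ = Φ (g * (1 - h) + g * h) := (map_add Φ _ _).symm
    _ = Φ g := by rw [hsum]
  let Λ : Content Z :=
    { toFun := fun C => Real.toNNReal (lam C)
      mono' := fun K₁ K₂ h => Real.toNNReal_mono (lam_mono _ _ h)
      sup_disjoint' := by
        intro K₁ K₂ hd h1 h2
        have : lam (↑K₁ ∪ ↑K₂) = lam ↑K₁ + lam ↑K₂ :=
          le_antisymm (lam_subadd _ _) (lam_superadd _ _ h1 h2 hd)
        simp only [TopologicalSpace.Compacts.coe_sup, sup_eq_union] at *
        rw [this, Real.toNNReal_add (lam_nonneg _) (lam_nonneg _)]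
      sup_le' := by
        intro K₁ K₂
        have h := lam_subadd (↑K₁) (↑K₂)
        calc Real.toNNReal (lam ↑(K₁ ⊔ K₂)) ≤ Real.toNNReal (lam ↑K₁ + lam ↑K₂) := by
              refine Real.toNNReal_mono ?_
              simpa only [TopologicalSpace.Compacts.coe_sup, sup_eq_union] using h
        _ = Real.toNNReal (lam ↑K₁) + Real.toNNReal (lam ↑K₂) :=
              Real.toNNReal_add (lam_nonneg _) (lam_nonneg _) }
  let ρ : Measure Z := Λ.measure
  have ρuniv_le : ρ univ ≤ 1 := by
    rw [show ρ univ = Λ.outerMeasure univ from Content.measure_apply Λ MeasurableSet.univ,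
      Λ.outerMeasure_of_isOpen univ isOpen_univ]
    refine iSup₂_le fun K _ => ?_
    have : Λ.toFun K ≤ 1 := by
      rw [show (1 : ℝ≥0) = Real.toNNReal 1 by simp]
      exact Real.toNNReal_mono (lam_le_one _)
    show ((Λ.toFun K : ℝ≥0) : ℝ≥0∞) ≤ 1
    exact_mod_cast this
  have ρcompact : ∀ (K : Set Y), IsCompact K → ∀ (C : Set Z), IsCompact C →
      (∀ y ∈ K, e (s y) ∈ C) → μ K ≤ ρ C := by
    intro K hK C hC hKC
    have hlam : (μ K).toReal ≤ lam C := by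
      refine le_lam C _ fun g hg => ?_
      exact Φcomp K hK.isClosed.measurableSet g hg.1 hg.2.1 fun y hy => hg.2.2 _ (hKC y hy)
    have h1 : μ K = ENNReal.ofReal ((μ K).toReal) := (ENNReal.ofReal_toReal (measure_ne_top μ K)).symm
    have h2 : (ENNReal.ofReal ((μ K).toReal)) ≤ ENNReal.ofReal (lam C) :=
      ENNReal.ofReal_le_ofReal hlam
    have h3 : (ENNReal.ofReal (lam C)) = ((Λ.toFun ⟨C, hC⟩ : ℝ≥0) : ℝ≥0∞) := rfl
    have h4 : ((Λ.toFun ⟨C, hC⟩ : ℝ≥0) : ℝ≥0∞) ≤ Λ.outerMeasure C :=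
      Content.le_outerMeasure_compacts Λ ⟨C, hC⟩
    rw [show ρ C = Λ.outerMeasure C from Content.measure_apply Λ hC.isClosed.measurableSet]
    rw [h1]
    exact h2.trans (h3 ▸ h4)
  haveI hρfin : IsFiniteMeasure ρ := ⟨lt_of_le_of_lt ρuniv_le ENNReal.one_lt_top⟩
  haveI hρreg0 : ρ.Regular := Λ.regular
  haveI hρreg1 : ρ.InnerRegularCompactLTTop := by infer_instance
  haveI hρreg : ρ.InnerRegular := by infer_instance
  -- Y and X nonempty
  have hYne : Nonempty Y := by
    by_contra h
    rw [not_nonempty_iff] at h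
    have h1 : μ univ = 1 := measure_univ
    rw [Set.univ_eq_empty_iff.mpr h, measure_empty] at h1
    exact zero_ne_one h1
  obtain ⟨y₀⟩ := hYne
  -- increasing sequence of compact sets almost exhausting μ
  have hKn : ∀ n : ℕ, ∃ K : Set Y, IsCompact K ∧ 1 - ((n : ℝ≥0∞) + 1)⁻¹ < μ K := by
    intro n
    have h1 : 1 - ((n : ℝ≥0∞) + 1)⁻¹ < μ univ := by
      rw [measure_univ]
      refine ENNReal.sub_lt_self ENNReal.one_ne_top one_ne_zero ?_
      simp
    rw [hμ.2 univ MeasurableSet.univ] at h1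
    obtain ⟨K, hK⟩ := lt_iSup_iff.mp h1
    obtain ⟨-, hK⟩ := lt_iSup_iff.mp hK
    obtain ⟨hKc, hK⟩ := lt_iSup_iff.mp hK
    exact ⟨K, hKc, hK⟩
  choose K' hK'c hK'lt using hKn
  let Kn : ℕ → Set Y := fun n => ⋃ i : Fin (n + 1), K' i.1
  have hKnc : ∀ n, IsCompact (Kn n) := fun n => isCompact_iUnion fun i => hK'c i.1
  have hKnmono : Monotone Kn := fun m n h =>
    iUnion_subset fun i => subset_iUnion_of_subset ⟨i.1, by omega⟩ subset_rfl
  have hKnge : ∀ n : ℕ, 1 - ((n : ℝ≥0∞) + 1)⁻¹ ≤ μ (Kn n) := fun n =>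
    (hK'lt n).le.trans (measure_mono (subset_iUnion_of_subset ⟨n, n.lt_succ_self⟩ subset_rfl))
  let Dn : ℕ → Set X := fun n => closure (s '' Kn n)
  have hDc : ∀ n, IsCompact (Dn n) := fun n => hs _ (hKnc n)
  have hDmono : Monotone Dn := fun m n h => closure_mono (image_mono (hKnmono h))
  let U : Set X := ⋃ n, Dn n
  -- measurability of images under e
  have meas_im : ∀ (n : ℕ) {B : Set X}, MeasurableSet B → MeasurableSet (e '' (B ∩ Dn n)) := by
    intro n B hB
    haveI : CompactSpace (Dn n) := isCompact_iff_compactSpace.mp (hDc n)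
    have hce : Topology.IsClosedEmbedding (fun d : Dn n => e d.1) :=
      Continuous.isClosedEmbedding (he.comp continuous_subtype_val)
        (fun a b hab => Subtype.ext (einj hab))
    have him : e '' (B ∩ Dn n) = (fun d : Dn n => e d.1) '' (Subtype.val ⁻¹' B) := by
      ext z
      constructor
      · rintro ⟨x, ⟨hxB, hxD⟩, rfl⟩
        exact ⟨⟨x, hxD⟩, hxB, rfl⟩
      · rintro ⟨d, hd, rfl⟩
        exact ⟨d.1, ⟨hd, d.2⟩, rfl⟩
    rw [him]
    exact hce.measurableEmbedding.measurableSet_image.mpr (measurable_subtype_coe hB)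
  have im_inter_U : ∀ B : Set X, e '' (B ∩ U) = ⋃ n, e '' (B ∩ Dn n) := by
    intro B
    rw [inter_iUnion, image_iUnion]
  have meas_imU : ∀ {B : Set X}, MeasurableSet B → MeasurableSet (e '' (B ∩ U)) := by
    intro B hB
    rw [im_inter_U]
    exact MeasurableSet.iUnion fun n => meas_im n hB
  have hSmeas : MeasurableSet (e '' U) := by
    have h : e '' U = e '' (univ ∩ U) := by rw [univ_inter]
    rw [h]
    exact meas_imU MeasurableSet.univ
  -- ρ gives full mass to e '' U
  have hSn_ge : ∀ n : ℕ, 1 - ((n : ℝ≥0∞) + 1)⁻¹ ≤ ρ (e '' Dn n) := by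
    intro n
    refine (hKnge n).trans ?_
    refine ρcompact _ (hKnc n) _ ((hDc n).image he) fun y hy => ?_
    exact mem_image_of_mem e (subset_closure (mem_image_of_mem s hy))
  have hSU : ρ (e '' U) = ⨆ n, ρ (e '' Dn n) := by
    rw [show e '' U = ⋃ n, e '' Dn n from image_iUnion]
    have hmono : Monotone (fun n => e '' Dn n) := fun m n h => image_mono (hDmono h)
    exact hmono.directed_le.measure_iUnion
  have hS1 : 1 ≤ ρ (e '' U) := by
    rw [hSU]
    refine ENNReal.le_of_forall_pos_le_add fun ε hε hlt => ?_
    obtain ⟨n, hn⟩ := ENNReal.exists_inv_nat_lt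
      (show ((ε : ℝ≥0∞)) ≠ 0 by exact_mod_cast hε.ne')
    have hn' : ((n : ℝ≥0∞) + 1)⁻¹ ≤ (ε : ℝ≥0∞) := by
      refine le_trans ?_ hn.le
      gcongr
      exact le_self_add
    calc (1 : ℝ≥0∞) = (1 - ((n : ℝ≥0∞) + 1)⁻¹) + ((n : ℝ≥0∞) + 1)⁻¹ := by
          rw [tsub_add_cancel_of_le (ENNReal.inv_le_one.mpr le_add_self)]
    _ ≤ (⨆ m, ρ (e '' Dn m)) + ε := add_le_add ((hSn_ge n).trans (le_iSup (fun m => ρ (e '' Dn m)) n)) hn'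
  have huniv1 : ρ univ = 1 := le_antisymm ρuniv_le (hS1.trans (measure_mono (subset_univ _)))
  have hρS : ρ (e '' U) = 1 :=
    le_antisymm (le_trans (measure_mono (subset_univ _)) ρuniv_le) hS1
  have hρSc : ρ ((e '' U)ᶜ) = 0 := by
    rw [measure_compl hSmeas (measure_ne_top ρ _), huniv1, hρS, tsub_self]
  -- the section-inverse map
  have hXne : Nonempty X := ⟨s y₀⟩
  let x₀ : X := Classical.arbitrary X
  let r : Z → X := fun z => if h : z ∈ e '' U then h.choose else x₀
  have hr_mem : ∀ (z : Z) (hz : z ∈ e '' U) (B : Set X), r z ∈ B ↔ z ∈ e '' (B ∩ U) := by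
    intro z hz B
    have hrz : r z = hz.choose := dif_pos hz
    obtain ⟨hcU, hce⟩ := hz.choose_spec
    constructor
    · intro hB
      exact ⟨hz.choose, ⟨by rwa [hrz] at hB, hcU⟩, hce⟩
    · rintro ⟨x, ⟨hxB, hxU⟩, rfl⟩
      have hx : hz.choose = x := einj hce
      rw [hrz, hx]
      exact hxB
  have hrmeas : Measurable r := by
    intro B hB
    by_cases hx₀ : x₀ ∈ B
    · have h : r ⁻¹' B = e '' (B ∩ U) ∪ (e '' U)ᶜ := by
        ext z
        by_cases hz : z ∈ e '' U
        · simp only [mem_preimage, mem_union, hr_mem z hz B, mem_compl_iff, hz,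
            not_true_eq_false, or_false]
        · have hrz : r z = x₀ := dif_neg hz
          simp [mem_preimage, hrz, hx₀, hz]
      rw [h]
      exact (meas_imU hB).union hSmeas.compl
    · have h : r ⁻¹' B = e '' (B ∩ U) := by
        ext z
        by_cases hz : z ∈ e '' U
        · simpa [mem_preimage] using hr_mem z hz B
        · have hrz : r z = x₀ := dif_neg hz
          have hz2 : z ∉ e '' (B ∩ U) := fun hc => hz (image_mono (f := e) inter_subset_right hc)
          simp [mem_preimage, hrz, hx₀, hz2]
      rw [h]
      exact meas_imU hB
  let ν : Measure X := Measure.map r (ρ.restrict (e '' U))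
  have hν : ∀ {B : Set X}, MeasurableSet B → ν B = ρ (e '' (B ∩ U)) := by
    intro B hB
    rw [show ν B = (Measure.map r (ρ.restrict (e '' U))) B from rfl,
      Measure.map_apply hrmeas hB, Measure.restrict_apply (hrmeas hB)]
    congr 1
    ext z
    constructor
    · rintro ⟨hzB, hzU⟩
      exact (hr_mem z hzU B).mp hzB
    · intro hz
      have hzU : z ∈ e '' U := image_mono (f := e) inter_subset_right hz
      exact ⟨(hr_mem z hzU B).mpr hz, hzU⟩
  have hν_univ : ν univ = 1 := by
    rw [hν MeasurableSet.univ, univ_inter, hρS]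
  haveI hνprob : IsProbabilityMeasure ν := ⟨hν_univ⟩
  -- lower bound on closures of images of sections
  have hDK_ge : ∀ K : Set Y, IsCompact K → μ K ≤ ν (closure (s '' K)) := by
    intro K hK
    rw [hν isClosed_closure.measurableSet]
    have h1 : μ K ≤ ρ (e '' closure (s '' K)) :=
      ρcompact K hK _ ((hs K hK).image he) fun y hy =>
        mem_image_of_mem e (subset_closure (mem_image_of_mem s hy))
    have h2 : ρ (e '' closure (s '' K)) ≤ ρ (e '' (closure (s '' K) ∩ U)) := by
      rw [image_inter einj]
      calc ρ (e '' closure (s '' K))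
          ≤ ρ ((e '' closure (s '' K) ∩ e '' U) ∪ (e '' U)ᶜ) := measure_mono (fun z hz => by
            by_cases h : z ∈ e '' U
            exacts [Or.inl ⟨hz, h⟩, Or.inr h])
        _ ≤ ρ (e '' closure (s '' K) ∩ e '' U) + ρ ((e '' U)ᶜ) := measure_union_le _ _
        _ = ρ (e '' closure (s '' K) ∩ e '' U) := by rw [hρSc, add_zero]
    exact h1.trans h2
  have himage_closure : ∀ K : Set Y, IsCompact K → closure (s '' K) ⊆ f ⁻¹' K := by
    intro K hK x hx
    have h1 : f '' closure (s '' K) ⊆ closure (f '' (s '' K)) :=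
      image_closure_subset_closure_image hf
    have h2 : f '' (s '' K) = K := by
      rw [← image_comp]
      have hfs : (f ∘ s) = id := funext hsec
      rw [hfs, image_id]
    have h3 : f x ∈ closure K := h2 ▸ h1 (mem_image_of_mem f hx)
    rwa [hK.isClosed.closure_eq] at h3
  have hpre : ∀ B : Set Y, MeasurableSet B → μ B ≤ ν (f ⁻¹' B) := by
    intro B hB
    rw [hμ.2 B hB]
    refine iSup₂_le fun K hKB => iSup_le fun hKc => ?_
    exact (hDK_ge K hKc).trans
      (measure_mono ((himage_closure K hKc).trans (preimage_mono hKB)))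
  have hmap : Measure.map f ν = μ := by
    ext B hB
    rw [Measure.map_apply hf.measurable hB]
    refine le_antisymm ?_ (hpre B hB)
    have hc : ν ((f ⁻¹' B)ᶜ) = 1 - ν (f ⁻¹' B) := prob_compl_eq_one_sub (hf.measurable hB)
    have hc2 : μ Bᶜ ≤ ν ((f ⁻¹' B)ᶜ) := by
      rw [← preimage_compl]
      exact hpre Bᶜ hB.compl
    have hμc : μ Bᶜ = 1 - μ B := prob_compl_eq_one_sub hB
    rw [hμc, hc] at hc2
    have h3 : 1 - (1 - ν (f ⁻¹' B)) ≤ 1 - (1 - μ B) := tsub_le_tsub_left hc2 1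
    rwa [ENNReal.sub_sub_cancel ENNReal.one_ne_top prob_le_one,
      ENNReal.sub_sub_cancel ENNReal.one_ne_top prob_le_one] at h3
  refine ⟨ν, ⟨hνprob, ?_⟩, hmap, ?_⟩
  · -- inner regularity of ν
    intro B hB
    refine le_antisymm ?_ (iSup₂_le fun K hKB => iSup_le fun _ => measure_mono hKB)
    have hmono : Monotone (fun n => e '' (B ∩ Dn n)) :=
      fun m n h => image_mono (inter_subset_inter_right _ (hDmono h))
    rw [hν hB, im_inter_U, hmono.directed_le.measure_iUnion]
    refine iSup_le fun n => ?_
    refine le_of_forall_lt fun c hc => ?_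
    obtain ⟨C, hCsub, hCc, hrC⟩ := (meas_im n hB).exists_lt_isCompact hc
    set C' : Set X := Dn n ∩ e ⁻¹' C with hC'def
    have hC'c : IsCompact C' := (hDc n).inter_right (hCc.isClosed.preimage he)
    have hC'B : C' ⊆ B := by
      rintro x ⟨hxD, hxC⟩
      obtain ⟨x', ⟨hx'B, hx'D⟩, hex⟩ := hCsub hxC
      rwa [einj hex] at hx'B
    have hCsub' : C ⊆ e '' (C' ∩ U) := by
      intro z hz
      obtain ⟨x, ⟨hxB, hxD⟩, rfl⟩ := hCsub hz
      exact ⟨x, ⟨⟨hxD, hz⟩, mem_iUnion.mpr ⟨n, hxD⟩⟩, rfl⟩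
    have hνC' : c < ν C' := by
      rw [hν hC'c.isClosed.measurableSet]
      exact hrC.trans_le (measure_mono hCsub')
    exact hνC'.trans_le (le_iSup₂_of_le C' hC'B (le_iSup_of_le hC'c le_rfl))
  · -- measure of closures of sections
    intro K hK
    refine le_antisymm ?_ (hDK_ge K hK)
    calc ν (closure (s '' K)) ≤ ν (f ⁻¹' K) := measure_mono (himage_closure K hK)
    _ = μ K := by
        rw [← Measure.map_apply hf.measurable hK.isClosed.measurableSet, hmap]

/-- If a continuous surjection `f : X → Y` between Tychonoff spaces admits
a section `s` preserving precompact sets, then there is an assignment `l` of Radon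
probability measures on `X` to Radon probability measures on `Y` such that
`f` pushes `l μ` forward to `μ` and `l μ (cl (s '' K)) = μ K` for every compact `K`. -/
theorem stmt_15 {X : Type u} {Y : Type v} [TopologicalSpace X] [TopologicalSpace Y]
    [T2Space X] [T2Space Y] [CompletelyRegularSpace X] [CompletelyRegularSpace Y]
    [MeasurableSpace X] [BorelSpace X] [MeasurableSpace Y] [BorelSpace Y]
    (f : X → Y) (hf : Continuous f) (hsurj : Function.Surjective f)
    (s : Y → X) (hsec : ∀ y, f (s y) = y)
    (hs : ∀ K : Set Y, IsCompact K → IsCompact (closure (s '' K))) :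
    ∃ l : Measure Y → Measure X,
      ∀ μ : Measure Y, IsRadonProb μ →
        IsRadonProb (l μ) ∧
        Measure.map f (l μ) = μ ∧
        ∀ K : Set Y, IsCompact K → (l μ) (closure (s '' K)) = μ K := by
  classical
  refine ⟨fun μ => if h : IsRadonProb μ then (key f hf s hsec hs μ h).choose else 0, ?_⟩
  intro μ hμ
  simp only [dif_pos hμ]
  exact (key f hf s hsec hs μ hμ).choose_spec
end

section
/- Let f : X → Y be a subproper continuous surjection between completely regular Hausdorff (Tychonoff) spaces. If X has the weak Skorohod property, then Y has the weak Skorohod property. -/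
open Filter Topology Set MeasureTheory
open scoped NNReal ENNReal

universe u v

/-- A sequence of measures is uniformly tight if for every `ε > 0` there is a compact
set whose complement has measure `< ε` for all measures of the sequence. -/
def UniformlyTight {X : Type*} [TopologicalSpace X] [MeasurableSpace X]
    (μs : ℕ → Measure X) : Prop :=
  ∀ ε : ENNReal, 0 < ε → ∃ K : Set X, IsCompact K ∧ ∀ n, μs n Kᶜ < ε

/-- The weak Skorohod property: to each Radon probability measure `μ` one can assign a
Borel function `ξ μ : [0,1] → X` (here modelled as a Borel function on `ℝ`, with Lebesgue
measure restricted to `[0,1]`) pushing Lebesgue measure on `[0,1]` to `μ`, so that every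
uniformly tight sequence of Radon probability measures admits a subsequence whose
associated functions converge almost everywhere on `[0,1]`. -/
def WeakSkorohod (X : Type*) [TopologicalSpace X] [MeasurableSpace X] : Prop :=
  ∃ ξ : Measure X → ℝ → X,
    (∀ μ : Measure X, IsRadonProb μ →
      Measurable (ξ μ) ∧
      Measure.map (ξ μ) (volume.restrict (Set.Icc (0:ℝ) 1)) = μ) ∧
    (∀ μs : ℕ → Measure X, (∀ n, IsRadonProb (μs n)) → UniformlyTight μs →
      ∃ (φ : ℕ → ℕ) (g : ℝ → X), StrictMono φ ∧
        ∀ᵐ t ∂(volume.restrict (Set.Icc (0:ℝ) 1)),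
          Tendsto (fun k => ξ (μs (φ k)) t) atTop (𝓝 (g t)))

/-- Any finite measure coming from a content is inner regular with respect to compact
sets on all Borel sets. -/
lemma content_measure_innerRegular {X : Type u} [TopologicalSpace X] [T2Space X]
    [MeasurableSpace X] [BorelSpace X] (lc : Content X)
    (hfin : lc.measure Set.univ ≠ ⊤) {B : Set X} (hB : MeasurableSet B) :
    lc.measure B = ⨆ (K : Set X) (_ : K ⊆ B) (_ : IsCompact K), lc.measure K := by
  set μ := lc.measure with hμ
  refine le_antisymm ?_ (iSup₂_le fun K hKB => iSup_le fun _ => measure_mono hKB)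
  refine ENNReal.le_of_forall_pos_le_add fun ε hε hsup => ?_
  set ε2 : ℝ≥0 := ε / 2 with hε2
  have hε2pos : (0:ℝ≥0) < ε2 := by positivity
  have hε2ne : (ε2 : ℝ≥0∞) ≠ 0 := by exact_mod_cast hε2pos.ne'
  -- a compact set capturing almost all the mass
  have hDex : ∃ D : Set X, IsCompact D ∧ μ Set.univ ≤ μ D + ε2 := by
    by_cases hle : μ Set.univ ≤ (ε2 : ℝ≥0∞)
    · exact ⟨∅, isCompact_empty, hle.trans le_add_self⟩
    push_neg at hle
    have huniv : μ Set.univ = lc.innerContent ⟨Set.univ, isOpen_univ⟩ := by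
      rw [hμ, lc.measure_apply MeasurableSet.univ,
        lc.outerMeasure_of_isOpen Set.univ isOpen_univ]
    have hlt : μ Set.univ - ε2 < lc.innerContent ⟨Set.univ, isOpen_univ⟩ := by
      rw [← huniv]
      exact ENNReal.sub_lt_self hfin (pos_of_gt hle).ne' hε2ne
    rw [Content.innerContent] at hlt
    obtain ⟨D, hD⟩ := lt_iSup_iff.1 hlt
    obtain ⟨-, hD⟩ := lt_iSup_iff.1 hD
    refine ⟨D, D.2, ?_⟩
    have h1 : (lc D : ℝ≥0∞) ≤ μ ↑D :=
      (lc.le_outerMeasure_compacts D).trans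
        (lc.measure_apply D.2.isClosed.measurableSet).ge
    have : μ Set.univ - ε2 ≤ μ ↑D := hD.le.trans h1
    calc μ Set.univ ≤ μ Set.univ - ε2 + ε2 := le_tsub_add
      _ ≤ μ ↑D + ε2 := by gcongr
  obtain ⟨D, hDcpt, hD⟩ := hDex
  have hDm : MeasurableSet D := hDcpt.isClosed.measurableSet
  -- an open set approximating `Bᶜ` from outside
  have hBc : μ Bᶜ ≠ ⊤ := (ne_top_of_le_ne_top hfin (measure_mono (subset_univ _)))
  obtain ⟨U, hBcU, hUo, hU⟩ := Set.exists_isOpen_lt_add Bᶜ hBc hε2ne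
  set E := Uᶜ ∩ D with hE
  have hEB : E ⊆ B := fun x hx => by
    by_contra hxB
    exact hx.1 (hBcU hxB)
  have hEcpt : IsCompact E := hDcpt.inter_left hUo.isClosed_compl
  -- μ (B ∩ U) ≤ ε2
  have hBU : μ (B ∩ U) ≤ ε2 := by
    have hdisj : Disjoint Bᶜ (B ∩ U) :=
      Set.disjoint_left.2 fun x hx hx' => hx hx'.1
    have hun : Bᶜ ∪ B ∩ U = U := by
      apply Set.eq_of_subset_of_subset
      · exact Set.union_subset hBcU inter_subset_right
      · intro x hxU
        by_cases hxB : x ∈ B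
        · exact Or.inr ⟨hxB, hxU⟩
        · exact Or.inl hxB
    have := measure_union (μ := μ) hdisj (hB.inter hUo.measurableSet)
    rw [hun] at this
    have hlt : μ Bᶜ + μ (B ∩ U) < μ Bᶜ + ε2 := by
      rw [← this]; exact hU
    exact le_of_lt ((ENNReal.add_lt_add_iff_left hBc).1 hlt)
  -- μ (B \ D) ≤ ε2
  have hBD : μ (B \ D) ≤ ε2 := by
    have h1 : μ (B \ D) ≤ μ (Set.univ \ D) := measure_mono (diff_subset_diff_left (subset_univ _))
    have h2 : μ (Set.univ \ D) = μ Set.univ - μ D :=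
      measure_diff (subset_univ _) hDm.nullMeasurableSet
        (ne_top_of_le_ne_top hfin (measure_mono (subset_univ _)))
    rw [h2] at h1
    exact h1.trans (tsub_le_iff_left.2 hD)
  -- assemble
  have hmain : μ B ≤ μ E + ε := by
    have step1 : μ B ≤ μ (B ∩ D) + μ (B \ D) := measure_le_inter_add_diff μ B D
    have step2 : μ (B ∩ D) ≤ μ E + μ (B ∩ U) := by
      have hsubset : B ∩ D ⊆ E ∪ B ∩ U := by
        intro x hx
        by_cases hxU : x ∈ U
        · exact Or.inr ⟨hx.1, hxU⟩
        · exact Or.inl ⟨hxU, hx.2⟩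
      exact (measure_mono hsubset).trans (measure_union_le _ _)
    have : μ B ≤ μ E + μ (B ∩ U) + μ (B \ D) := step1.trans (by gcongr)
    refine this.trans ?_
    have hee : (ε2 : ℝ≥0∞) + ε2 = ε := by
      rw [← ENNReal.coe_add, hε2, add_halves]
    calc μ E + μ (B ∩ U) + μ (B \ D) ≤ μ E + ε2 + ε2 := by gcongr
      _ = μ E + ε := by rw [add_assoc, hee]
  refine hmain.trans ?_
  gcongr
  exact le_iSup₂_of_le E hEB (le_iSup_of_le hEcpt le_rfl)

/-- The key lifting lemma: along a subproper continuous surjection, every Radon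
probability measure on the target lifts to a Radon probability measure on the source
which moreover gives mass at least `ν K` to `closure (Z ∩ f ⁻¹' K)` for every compact
`K`. -/
lemma exists_radon_lift {X : Type u} {Y : Type v} [TopologicalSpace X] [TopologicalSpace Y]
    [T2Space X] [T2Space Y]
    [MeasurableSpace X] [BorelSpace X] [MeasurableSpace Y] [BorelSpace Y]
    (hne : Nonempty X)
    (f : X → Y) (hf : Continuous f)
    (Z : Set X) (hZ : f '' Z = univ)
    (hZK : ∀ K : Set Y, IsCompact K → IsCompact (closure (Z ∩ f ⁻¹' K)))
    (ν : Measure Y) (hν : IsRadonProb ν) :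
    ∃ μ : Measure X, IsRadonProb μ ∧ Measure.map f μ = ν ∧
      ∀ K : Set Y, IsCompact K → ν K ≤ μ (closure (Z ∩ f ⁻¹' K)) := by
  classical
  haveI := hν.1
  haveI hneY : Nonempty Y := ⟨f (Classical.arbitrary X)⟩
  -- a section of `f` through `Z`
  have hz : ∀ y : Y, ∃ x : X, x ∈ Z ∧ f x = y := by
    intro y
    have : y ∈ f '' Z := by rw [hZ]; exact mem_univ y
    obtain ⟨x, hxZ, hxy⟩ := this
    exact ⟨x, hxZ, hxy⟩
  choose zsec hzsec1 hzsec2 using hz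
  set ι := {K : Set Y // IsCompact K} with hι
  haveI : Nonempty ι := ⟨⟨∅, isCompact_empty⟩⟩
  -- atoms of a finite family of compact sets
  set A : Finset ι → Finset ι → Set Y :=
    fun S F => (⋂ K ∈ S, K.1) ∩ ⋂ K ∈ F \ S, (K.1)ᶜ with hA
  have hAmeas : ∀ S F : Finset ι, MeasurableSet (A S F) := by
    intro S F
    refine MeasurableSet.inter ?_ ?_
    · exact Finset.measurableSet_biInter _ fun K _ => K.2.isClosed.measurableSet
    · exact Finset.measurableSet_biInter _ fun K _ => K.2.isClosed.measurableSet.compl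
  have hmem : ∀ (y : Y) (F : Finset ι), y ∈ A (F.filter fun K => y ∈ K.1) F := by
    intro y F
    constructor
    · exact Set.mem_iInter₂.2 fun K hK => (Finset.mem_filter.1 hK).2
    · refine Set.mem_iInter₂.2 fun K hK => ?_
      obtain ⟨hKF, hKS⟩ := Finset.mem_sdiff.1 hK
      intro hyK
      exact hKS (Finset.mem_filter.2 ⟨hKF, hyK⟩)
  have huniq : ∀ (y : Y) (S F : Finset ι), S ∈ F.powerset → y ∈ A S F →
      S = F.filter fun K => y ∈ K.1 := by
    intro y S F hSF hyA
    have hSsub : S ⊆ F := Finset.mem_powerset.1 hSF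
    ext K
    simp only [Finset.mem_filter]
    constructor
    · intro hKS
      exact ⟨hSsub hKS, Set.mem_iInter₂.1 hyA.1 K hKS⟩
    · rintro ⟨hKF, hyK⟩
      by_contra hKS
      exact (Set.mem_iInter₂.1 hyA.2 K (Finset.mem_sdiff.2 ⟨hKF, hKS⟩)) hyK
  have hAK : ∀ (K : ι) (S F : Finset ι), K ∈ S → A S F ⊆ K.1 := by
    intro K S F hKS y hy
    exact Set.mem_iInter₂.1 hy.1 K hKS
  have hdisj : ∀ F : Finset ι,
      (↑F.powerset : Set (Finset ι)).PairwiseDisjoint (fun S => A S F) := by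
    intro F S1 hS1 S2 hS2 hne12
    refine Set.disjoint_left.2 fun y hy1 hy2 => hne12 ?_
    rw [huniq y S1 F (by exact_mod_cast hS1) hy1, huniq y S2 F (by exact_mod_cast hS2) hy2]
  have hcoverU : ∀ F : Finset ι, (⋃ S ∈ F.powerset, A S F) = univ := by
    intro F
    refine Set.eq_univ_of_forall fun y => ?_
    exact Set.mem_biUnion (Finset.mem_powerset.2 (Finset.filter_subset _ _)) (hmem y F)
  have hcoverK : ∀ (K : ι) (F : Finset ι), K ∈ F →
      (⋃ S ∈ F.powerset.filter (fun S => K ∈ S), A S F) = K.1 := by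
    intro K F hKF
    apply Set.eq_of_subset_of_subset
    · refine Set.iUnion₂_subset fun S hS => ?_
      exact hAK K S F (Finset.mem_filter.1 hS).2
    · intro y hyK
      refine Set.mem_biUnion (Finset.mem_filter.2 ⟨Finset.mem_powerset.2
        (Finset.filter_subset _ _), Finset.mem_filter.2 ⟨hKF, hyK⟩⟩) (hmem y F)
  have hsum1 : ∀ F : Finset ι, (∑ S ∈ F.powerset, ν (A S F)) = 1 := by
    intro F
    rw [← measure_biUnion_finset (hdisj F) (fun S _ => hAmeas S F), hcoverU F, measure_univ]
  have hsumK : ∀ (K : ι) (F : Finset ι), K ∈ F →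
      (∑ S ∈ F.powerset, if K ∈ S then ν (A S F) else 0) = ν K.1 := by
    intro K F hKF
    rw [← Finset.sum_filter, ← measure_biUnion_finset
      ((hdisj F).subset (by exact_mod_cast Finset.filter_subset _ _))
      (fun S _ => hAmeas S F), hcoverK K F hKF]
  -- the chosen point in `X` over a set of `Y`
  set ypt : Set Y → Y := fun B => if h : B.Nonempty then h.some else Classical.arbitrary Y
    with hypt
  set xpt : Set Y → X := fun B => zsec (ypt B) with hxpt
  -- the finitely supported approximate lifts
  set g : Finset ι → Set X → ℝ≥0∞ :=
    fun F D => ∑ S ∈ F.powerset, if xpt (A S F) ∈ D then ν (A S F) else 0 with hg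
  have hgle : ∀ (F : Finset ι) (D : Set X), g F D ≤ 1 := by
    intro F D
    rw [← hsum1 F]
    refine Finset.sum_le_sum fun S _ => ?_
    split_ifs
    · exact le_rfl
    · exact zero_le
  have hgmono : ∀ (F : Finset ι) (D1 D2 : Set X), D1 ⊆ D2 → g F D1 ≤ g F D2 := by
    intro F D1 D2 h12
    refine Finset.sum_le_sum fun S _ => ?_
    by_cases h1 : xpt (A S F) ∈ D1
    · rw [if_pos h1, if_pos (h12 h1)]
    · rw [if_neg h1]; exact zero_le
  have hgadd : ∀ (F : Finset ι) (D1 D2 : Set X), Disjoint D1 D2 →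
      g F (D1 ∪ D2) = g F D1 + g F D2 := by
    intro F D1 D2 hd
    rw [hg, ← Finset.sum_add_distrib]
    refine Finset.sum_congr rfl fun S _ => ?_
    by_cases h1 : xpt (A S F) ∈ D1 <;> by_cases h2 : xpt (A S F) ∈ D2
    · exact absurd (Set.disjoint_left.1 hd h1) (fun h => h h2)
    · simp [h1, h2]
    · simp [h1, h2]
    · simp [h1, h2]
  have hgsub : ∀ (F : Finset ι) (D1 D2 : Set X), g F (D1 ∪ D2) ≤ g F D1 + g F D2 := by
    intro F D1 D2
    rw [hg, ← Finset.sum_add_distrib]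
    refine Finset.sum_le_sum fun S _ => ?_
    by_cases h1 : xpt (A S F) ∈ D1 <;> by_cases h2 : xpt (A S F) ∈ D2 <;>
      simp [h1, h2]
  have hgK : ∀ (K : ι) (F : Finset ι), K ∈ F →
      ν K.1 ≤ g F (closure (Z ∩ f ⁻¹' K.1)) := by
    intro K F hKF
    rw [← hsumK K F hKF]
    refine Finset.sum_le_sum fun S hS => ?_
    by_cases hKS : K ∈ S
    · rw [if_pos hKS]
      by_cases hne' : (A S F).Nonempty
      · have hy : ypt (A S F) ∈ A S F := by
          rw [hypt]; simp only [dif_pos hne']; exact hne'.some_mem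
        have hyK : ypt (A S F) ∈ K.1 := hAK K S F hKS hy
        have hx : xpt (A S F) ∈ Z ∩ f ⁻¹' K.1 := by
          refine ⟨hzsec1 _, ?_⟩
          rw [Set.mem_preimage, hxpt, hzsec2]
          exact hyK
        rw [if_pos (subset_closure hx)]
      · rw [Set.not_nonempty_iff_eq_empty.1 hne']
        simp
    · rw [if_neg hKS]
      exact zero_le
  -- the ultrafilter limit
  haveI : Nonempty (Finset ι) := ⟨∅⟩
  set 𝒰 : Ultrafilter (Finset ι) := Ultrafilter.of atTop with h𝒰
  have hmemU : ∀ K : ι, {F : Finset ι | K ∈ F} ∈ 𝒰 := by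
    intro K
    refine Ultrafilter.of_le atTop ?_
    refine mem_atTop_sets.2 ⟨{K}, fun F hF => ?_⟩
    exact Finset.singleton_subset_iff.1 hF
  set L : Set X → ℝ≥0∞ := fun D => limUnder 𝒰 fun F => g F D with hL
  have htend : ∀ D : Set X, Tendsto (fun F => g F D) 𝒰 (𝓝 (L D)) := by
    intro D
    apply tendsto_nhds_limUnder
    obtain ⟨x, -, hx⟩ := (isCompact_univ (X := ℝ≥0∞)).ultrafilter_le_nhds
      (𝒰.map fun F => g F D) (by simp)
    rw [Ultrafilter.coe_map] at hx
    exact ⟨x, hx⟩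
  have hL1 : ∀ D : Set X, L D ≤ 1 := fun D =>
    le_of_tendsto (htend D) (Eventually.of_forall fun F => hgle F D)
  have hLne : ∀ D : Set X, L D ≠ ⊤ := fun D => ((hL1 D).trans_lt ENNReal.one_lt_top).ne
  have hLC : ∀ K : ι, ν K.1 ≤ L (closure (Z ∩ f ⁻¹' K.1)) := by
    intro K
    refine ge_of_tendsto (htend _) ?_
    exact mem_of_superset (hmemU K) fun F hF => hgK K F hF
  have hLmono : ∀ D1 D2 : Set X, D1 ⊆ D2 → L D1 ≤ L D2 := fun D1 D2 h =>
    le_of_tendsto_of_tendsto' (htend D1) (htend D2) fun F => hgmono F D1 D2 h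
  have hLadd : ∀ D1 D2 : Set X, Disjoint D1 D2 → L (D1 ∪ D2) = L D1 + L D2 := by
    intro D1 D2 hd
    refine tendsto_nhds_unique (htend (D1 ∪ D2)) ?_
    have : (fun F => g F (D1 ∪ D2)) = fun F => g F D1 + g F D2 :=
      funext fun F => hgadd F D1 D2 hd
    rw [this]
    exact (htend D1).add (htend D2)
  have hLsub : ∀ D1 D2 : Set X, L (D1 ∪ D2) ≤ L D1 + L D2 := fun D1 D2 =>
    le_of_tendsto_of_tendsto' (htend (D1 ∪ D2)) ((htend D1).add (htend D2))
      fun F => hgsub F D1 D2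
  -- the content
  set lc : Content X :=
    { toFun := fun D => (L D).toNNReal
      mono' := fun K1 K2 h => ENNReal.toNNReal_mono (hLne _) (hLmono _ _ h)
      sup_disjoint' := by
        intro K1 K2 hd _ _
        simp only [TopologicalSpace.Compacts.coe_sup, sup_eq_union]
        rw [hLadd _ _ hd, ENNReal.toNNReal_add (hLne _) (hLne _)]
      sup_le' := by
        intro K1 K2
        simp only [TopologicalSpace.Compacts.coe_sup, sup_eq_union]
        rw [← ENNReal.toNNReal_add (hLne _) (hLne _)]
        exact ENNReal.toNNReal_mono (ENNReal.add_ne_top.2 ⟨hLne _, hLne _⟩)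
          (hLsub _ _) } with hlc
  have hlcL : ∀ K : TopologicalSpace.Compacts X, (lc K : ℝ≥0∞) = L K := by
    intro K
    exact ENNReal.coe_toNNReal (hLne _)
  set μ := lc.measure with hμdef
  -- content measure dominates the content on compacts
  have m1 : ∀ D : Set X, IsCompact D → L D ≤ μ D := by
    intro D hD
    have h := lc.le_outerMeasure_compacts ⟨D, hD⟩
    rw [hlcL] at h
    exact h.trans (lc.measure_apply hD.isClosed.measurableSet).ge
  have m2 : μ Set.univ ≤ 1 := by
    rw [hμdef, lc.measure_apply MeasurableSet.univ,
      lc.outerMeasure_of_isOpen Set.univ isOpen_univ, Content.innerContent]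
    refine iSup₂_le fun K _ => ?_
    rw [hlcL]
    exact hL1 _
  have mμK : ∀ K : Set Y, IsCompact K → ν K ≤ μ (closure (Z ∩ f ⁻¹' K)) := by
    intro K hK
    exact (hLC ⟨K, hK⟩).trans (m1 _ (hZK K hK))
  have m4 : (1:ℝ≥0∞) ≤ μ Set.univ := by
    have h := hν.2 Set.univ MeasurableSet.univ
    rw [measure_univ] at h
    rw [h]
    refine iSup₂_le fun K _ => iSup_le fun hK => ?_
    exact (mμK K hK).trans (measure_mono (subset_univ _))
  have hprob : IsProbabilityMeasure μ := ⟨le_antisymm m2 m4⟩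
  haveI := hprob
  have hCsub : ∀ K : Set Y, IsCompact K → closure (Z ∩ f ⁻¹' K) ⊆ f ⁻¹' K := by
    intro K hK
    exact closure_minimal inter_subset_right (hK.isClosed.preimage hf)
  have hmap : Measure.map f μ = ν := by
    refine Measure.ext fun B hB => ?_
    rw [Measure.map_apply hf.measurable hB]
    have le1 : ∀ (B' : Set Y), MeasurableSet B' → ν B' ≤ μ (f ⁻¹' B') := by
      intro B' hB'
      rw [hν.2 B' hB']
      refine iSup₂_le fun K hKB => iSup_le fun hK => ?_
      refine (mμK K hK).trans (measure_mono ?_)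
      exact (hCsub K hK).trans (preimage_mono hKB)
    have ge1 : μ (f ⁻¹' B) ≤ ν B := by
      have e1 : μ (f ⁻¹' B) = 1 - μ ((f ⁻¹' B)ᶜ) := by
        rw [← prob_compl_eq_one_sub (hB.preimage hf.measurable).compl, compl_compl]
      have e2 : ν B = 1 - ν Bᶜ := by
        rw [← prob_compl_eq_one_sub hB.compl, compl_compl]
      rw [e1, e2]
      refine tsub_le_tsub_left ?_ 1
      have := le1 Bᶜ hB.compl
      rwa [Set.preimage_compl] at this
    exact le_antisymm ge1 (le1 B hB)
  have hradon : IsRadonProb μ := by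
    refine ⟨hprob, fun B hB => ?_⟩
    exact content_measure_innerRegular lc (by simp) hB
  exact ⟨μ, hradon, hmap, mμK⟩

/-- The weak Skorohod property is preserved by subproper maps between
Tychonoff spaces. -/
theorem stmt_16 {X : Type u} {Y : Type v} [TopologicalSpace X] [TopologicalSpace Y]
    [T2Space X] [T2Space Y] [CompletelyRegularSpace X] [CompletelyRegularSpace Y]
    [MeasurableSpace X] [BorelSpace X] [MeasurableSpace Y] [BorelSpace Y]
    (f : X → Y) (hf : Continuous f) (hsurj : Function.Surjective f)
    (hsub : ∃ Z : Set X, f '' Z = univ ∧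
      ∀ K : Set Y, IsCompact K → IsCompact (closure (Z ∩ f ⁻¹' K)))
    (hX : WeakSkorohod X) :
    WeakSkorohod Y := by
  classical
  obtain ⟨ξX, hξ1, hξ2⟩ := hX
  have hneX : Nonempty X := ⟨ξX 0 0⟩
  obtain ⟨Z, hZ, hZK⟩ := hsub
  -- the canonical lift of Radon probability measures
  set Lft : Measure Y → Measure X := fun ν =>
    if h : IsRadonProb ν then
      Classical.choose (exists_radon_lift hneX f hf Z hZ hZK ν h) else 0 with hLft
  have hLftSpec : ∀ (ν : Measure Y), IsRadonProb ν →
      IsRadonProb (Lft ν) ∧ Measure.map f (Lft ν) = ν ∧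
      ∀ K : Set Y, IsCompact K → ν K ≤ (Lft ν) (closure (Z ∩ f ⁻¹' K)) := by
    intro ν h
    rw [hLft]
    simp only [dif_pos h]
    exact Classical.choose_spec (exists_radon_lift hneX f hf Z hZ hZK ν h)
  refine ⟨fun ν => f ∘ ξX (Lft ν), ?_, ?_⟩
  · intro ν hν
    obtain ⟨hrad, hmap, -⟩ := hLftSpec ν hν
    obtain ⟨hmeas, hpush⟩ := hξ1 (Lft ν) hrad
    refine ⟨hf.measurable.comp hmeas, ?_⟩
    rw [← Measure.map_map hf.measurable hmeas, hpush, hmap]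
  · intro νs hνs hUT
    set μs : ℕ → Measure X := fun n => Lft (νs n) with hμs
    have hμrad : ∀ n, IsRadonProb (μs n) := fun n => (hLftSpec (νs n) (hνs n)).1
    have hμUT : UniformlyTight μs := by
      intro ε hε
      obtain ⟨K, hK, hKn⟩ := hUT ε hε
      refine ⟨closure (Z ∩ f ⁻¹' K), hZK K hK, fun n => ?_⟩
      haveI := (hμrad n).1
      haveI := (hνs n).1
      have h1 : μs n (closure (Z ∩ f ⁻¹' K))ᶜ = 1 - μs n (closure (Z ∩ f ⁻¹' K)) :=
        prob_compl_eq_one_sub isClosed_closure.measurableSet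
      have h2 : νs n Kᶜ = 1 - νs n K := prob_compl_eq_one_sub hK.isClosed.measurableSet
      have h3 : νs n K ≤ μs n (closure (Z ∩ f ⁻¹' K)) :=
        (hLftSpec (νs n) (hνs n)).2.2 K hK
      calc μs n (closure (Z ∩ f ⁻¹' K))ᶜ = 1 - μs n (closure (Z ∩ f ⁻¹' K)) := h1
        _ ≤ 1 - νs n K := tsub_le_tsub_left h3 1
        _ = νs n Kᶜ := h2.symm
        _ < ε := hKn n
    obtain ⟨φ, g, hφ, hconv⟩ := hξ2 μs hμrad hμUT
    refine ⟨φ, f ∘ g, hφ, ?_⟩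
    filter_upwards [hconv] with t ht
    exact ((hf.tendsto (g t)).comp ht)
end

section
/- Let X be a real normed space whose continuous dual space X* (with the dual norm) is separable. Then X endowed with its weak topology has a countable k-network. -/
open Filter Topology Set

universe u

/-- The weak topology on a real normed space `X`: the coarsest topology making every
continuous linear functional on `X` continuous. -/
def weakTopology (X : Type u) [NormedAddCommGroup X] [NormedSpace ℝ X] :
    TopologicalSpace X :=
  ⨅ φ : StrongDual ℝ X, TopologicalSpace.induced (⇑φ) inferInstance

lemma weakTopology_eq_weakSpace (X : Type u) [NormedAddCommGroup X] [NormedSpace ℝ X] :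
    weakTopology X = (inferInstance : TopologicalSpace (WeakSpace ℝ X)) := by
  show (⨅ φ : StrongDual ℝ X, TopologicalSpace.induced (⇑φ) inferInstance) =
    TopologicalSpace.induced
      (fun (x : X) (φ : StrongDual ℝ X) => ((topDualPairing ℝ X).flip x) φ)
      (⨅ φ : StrongDual ℝ X,
        TopologicalSpace.induced (fun g : StrongDual ℝ X → ℝ => g φ) inferInstance)
  rw [induced_iInf]
  simp only [induced_compose]
  rfl

variable {X : Type u} [NormedAddCommGroup X] [NormedSpace ℝ X]

lemma eval_cont (φ : StrongDual ℝ X) : Continuous fun y : WeakSpace ℝ X => φ y :=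
  WeakBilin.eval_continuous ((topDualPairing ℝ X).flip) φ

lemma inducing_eval :
    IsInducing (fun (x : WeakSpace ℝ X) (φ : StrongDual ℝ X) => φ x) := ⟨rfl⟩

/-- weakly compact sets are norm bounded -/
lemma weak_compact_bounded {K : Set X}
    (hK : IsCompact (show Set (WeakSpace ℝ X) from K)) :
    ∃ m : ℕ, ∀ x ∈ K, ‖x‖ ≤ m := by
  have hpt : ∀ φ : StrongDual ℝ X, ∃ C, ∀ x : K,
      ‖NormedSpace.inclusionInDoubleDual ℝ X (x : X) φ‖ ≤ C := by
    intro φ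
    have hcomp : IsCompact ((fun y : WeakSpace ℝ X => φ y) '' (show Set (WeakSpace ℝ X) from K)) :=
      hK.image (eval_cont φ)
    obtain ⟨C, hC⟩ := hcomp.isBounded.subset_closedBall 0
    refine ⟨C, fun x => ?_⟩
    have := hC (mem_image_of_mem (fun y : WeakSpace ℝ X => φ y) x.2)
    simpa [Real.norm_eq_abs, Real.dist_eq] using this
  obtain ⟨C', hC'⟩ := banach_steinhaus hpt
  obtain ⟨m, hm⟩ := exists_nat_ge C'
  refine ⟨m, fun x hx => ?_⟩
  have h1 : ‖NormedSpace.inclusionInDoubleDual ℝ X (x : X)‖ ≤ C' := hC' ⟨x, hx⟩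
  have h2 : ‖NormedSpace.inclusionInDoubleDual ℝ X (x : X)‖ = ‖(x : X)‖ :=
    (NormedSpace.inclusionInDoubleDualLi ℝ (E := X)).norm_map x
  linarith

def netSet (u : ℕ → StrongDual ℝ X) (p : ℕ × Finset (ℕ × ℚ × ℚ)) : Set X :=
  Metric.closedBall 0 p.1 ∩ ⋂ t ∈ p.2, {y : X | |u t.1 y - (t.2.1 : ℝ)| < (t.2.2 : ℝ)}

lemma key_lemma {u : ℕ → StrongDual ℝ X} (hu : DenseRange u) (m : ℕ) {U : Set X}
    (hU : IsOpen (show Set (WeakSpace ℝ X) from U)) {x : X} (hxU : x ∈ U) (hxm : ‖x‖ ≤ m) :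
    ∃ F : Finset (ℕ × ℚ × ℚ), ∃ W : Set X,
      IsOpen (show Set (WeakSpace ℝ X) from W) ∧ x ∈ W ∧
      netSet u (m, F) = Metric.closedBall 0 m ∩ W ∧ netSet u (m, F) ⊆ U := by
  have hmem : U ∈ @nhds (WeakSpace ℝ X) _ x := hU.mem_nhds hxU
  have e := (inducing_eval (X := X)).nhds_eq_comap x
  rw [nhds_pi] at e
  rw [e] at hmem
  obtain ⟨V, hV, hVU⟩ := hmem
  obtain ⟨I, t, ht, htV⟩ := Filter.mem_pi'.mp hV
  have hballs : ∀ φ ∈ I, ∃ ε : ℝ, 0 < ε ∧ Metric.ball (φ x) ε ⊆ t φ := by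
    intro φ _
    obtain ⟨ε, hε, hb⟩ := Metric.mem_nhds_iff.mp (ht φ)
    exact ⟨ε, hε, hb⟩
  choose! εf hεpos hεb using hballs
  set S : Finset ℝ := insert (1 : ℝ) (I.image εf) with hS
  have hSne : S.Nonempty := ⟨1, Finset.mem_insert_self _ _⟩
  set ε : ℝ := S.min' hSne with hεdef
  have hε : 0 < ε := by
    rw [hεdef]
    rcases Finset.mem_insert.mp (S.min'_mem hSne) with h | h
    · rw [h]; norm_num
    · obtain ⟨φ, hφ, hφ2⟩ := Finset.mem_image.mp h
      rw [← hφ2]; exact hεpos φ hφ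
  have hεle : ∀ φ ∈ I, ε ≤ εf φ := fun φ hφ =>
    S.min'_le _ (Finset.mem_insert_of_mem (Finset.mem_image_of_mem εf hφ))
  have hWU : ∀ y : X, (∀ φ ∈ I, |φ y - φ x| < ε) → y ∈ U := by
    intro y hy
    apply hVU
    apply htV
    intro φ hφ
    have hφI : φ ∈ I := by simpa using hφ
    apply hεb φ hφI
    rw [Metric.mem_ball, Real.dist_eq]
    exact lt_of_lt_of_le (hy φ hφI) (hεle φ hφI)
  set δ : ℝ := ε / (8 * (m + 1)) with hδdef
  have hδ : 0 < δ := by positivity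
  have happrox : ∀ φ ∈ I, ∃ n, ‖φ - u n‖ < δ := by
    intro φ _
    obtain ⟨n, hn⟩ := hu.exists_dist_lt φ hδ
    exact ⟨n, by rwa [dist_eq_norm] at hn⟩
  choose! nf hnf using happrox
  have hq : ∀ φ ∈ I, ∃ q : ℚ, |u (nf φ) x - (q : ℝ)| < ε / 8 := by
    intro φ _
    exact exists_rat_near _ (by positivity)
  choose! qf hqf using hq
  obtain ⟨r, hr1, hr2⟩ := exists_rat_btwn (show ε / 4 < ε / 3 by linarith)
  refine ⟨I.image (fun φ => (nf φ, qf φ, r)),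
    ⋂ s ∈ I.image (fun φ => (nf φ, qf φ, r)), {y : X | |u s.1 y - (s.2.1 : ℝ)| < (s.2.2 : ℝ)},
    ?_, ?_, rfl, ?_⟩
  · apply isOpen_biInter_finset
    rintro ⟨n, q, ρ⟩ _
    show IsOpen {y : WeakSpace ℝ X | |u n y - (q : ℝ)| < (ρ : ℝ)}
    have heq : {y : WeakSpace ℝ X | |u n y - (q : ℝ)| < (ρ : ℝ)}
        = (fun y : WeakSpace ℝ X => u n y) ⁻¹' Metric.ball (q : ℝ) (ρ : ℝ) := by
      ext y; simp [Real.dist_eq]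
    rw [heq]
    exact (eval_cont (u n)).isOpen_preimage _ Metric.isOpen_ball
  · apply Set.mem_iInter₂.mpr
    intro s hs
    obtain ⟨φ, hφ, rfl⟩ := Finset.mem_image.mp hs
    show |u (nf φ) x - (qf φ : ℝ)| < (r : ℝ)
    have h1 := hqf φ hφ
    linarith
  · rintro y ⟨hy1, hy2⟩
    have hym : ‖y‖ ≤ m := by simpa using hy1
    apply hWU
    intro φ hφ
    have hmemF : (nf φ, qf φ, r) ∈ I.image (fun φ => (nf φ, qf φ, r)) :=
      Finset.mem_image_of_mem _ hφ
    have h1 : |u (nf φ) y - (qf φ : ℝ)| < (r : ℝ) := by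
      have := Set.mem_iInter₂.mp hy2 _ hmemF
      simpa using this
    have h2 : |φ y - u (nf φ) y| ≤ δ * m := by
      calc |φ y - u (nf φ) y| = ‖(φ - u (nf φ)) y‖ := by
            simp [Real.norm_eq_abs, ContinuousLinearMap.sub_apply]
        _ ≤ ‖φ - u (nf φ)‖ * ‖y‖ := (φ - u (nf φ)).le_opNorm y
        _ ≤ δ * m := by
            apply mul_le_mul (le_of_lt (hnf φ hφ)) hym (norm_nonneg y) (le_of_lt hδ)
    have h3 : |u (nf φ) x - φ x| ≤ δ * m := by
      calc |u (nf φ) x - φ x| = ‖(φ - u (nf φ)) x‖ := by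
            rw [abs_sub_comm]; simp [Real.norm_eq_abs, ContinuousLinearMap.sub_apply]
        _ ≤ ‖φ - u (nf φ)‖ * ‖x‖ := (φ - u (nf φ)).le_opNorm x
        _ ≤ δ * m := by
            apply mul_le_mul (le_of_lt (hnf φ hφ)) hxm (norm_nonneg x) (le_of_lt hδ)
    have h4 := hqf φ hφ
    have hδm : δ * m ≤ ε / 8 := by
      have h8 : δ * (8 * (m + 1)) = ε := by
        rw [hδdef]; field_simp
      nlinarith [hδ.le, (Nat.cast_nonneg m : (0:ℝ) ≤ m)]
    have habs : |φ y - φ x| ≤ |φ y - u (nf φ) y| + |u (nf φ) y - (qf φ : ℝ)|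
        + |(qf φ : ℝ) - u (nf φ) x| + |u (nf φ) x - φ x| := by
      have t1 := abs_sub_le (φ y) (u (nf φ) y) (φ x)
      have t2 := abs_sub_le (u (nf φ) y) ((qf φ : ℝ)) (φ x)
      have t3 := abs_sub_le ((qf φ : ℝ)) (u (nf φ) x) (φ x)
      linarith
    have h5 : |(qf φ : ℝ) - u (nf φ) x| < ε / 8 := by rw [abs_sub_comm]; exact h4
    linarith

/-- If the continuous dual of a real normed space `X` is separable, then
`X` with the weak topology has a countable k-network. -/
theorem stmt_17 {X : Type u} [NormedAddCommGroup X] [NormedSpace ℝ X]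
    [TopologicalSpace.SeparableSpace (StrongDual ℝ X)] :
    ∃ 𝒩 : Set (Set X), 𝒩.Countable ∧
      ∀ U : Set X, IsOpen[weakTopology X] U →
        ∀ K : Set X, @IsCompact X (weakTopology X) K → K ⊆ U →
          ∃ 𝓕 ⊆ 𝒩, 𝓕.Finite ∧ K ⊆ ⋃₀ 𝓕 ∧ ⋃₀ 𝓕 ⊆ U := by
  have hne : Nonempty (StrongDual ℝ X) := ⟨0⟩
  set u := TopologicalSpace.denseSeq (StrongDual ℝ X) with hudef
  have hu : DenseRange u := TopologicalSpace.denseRange_denseSeq _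
  refine ⟨Set.range (netSet u), countable_range _, ?_⟩
  intro U hU K hK hKU
  rw [weakTopology_eq_weakSpace] at hU hK
  have hU' : IsOpen (show Set (WeakSpace ℝ X) from U) := hU
  have hK' : IsCompact (show Set (WeakSpace ℝ X) from K) := hK
  obtain ⟨m, hm⟩ := weak_compact_bounded hK'
  have key : ∀ x ∈ K, ∃ p : ℕ × Finset (ℕ × ℚ × ℚ), ∃ W : Set X,
      IsOpen (show Set (WeakSpace ℝ X) from W) ∧ x ∈ W ∧
      netSet u p = Metric.closedBall 0 m ∩ W ∧ netSet u p ⊆ U := by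
    intro x hx
    obtain ⟨F, W, h1, h2, h3, h4⟩ := key_lemma hu m hU' (hKU hx) (hm x hx)
    exact ⟨(m, F), W, h1, h2, h3, h4⟩
  choose! p W hWopen hxW hNeq hNU using key
  have hcover : (show Set (WeakSpace ℝ X) from K)
      ⊆ ⋃ x ∈ K, (show Set (WeakSpace ℝ X) from W x) :=
    fun y hy => Set.mem_iUnion₂.mpr ⟨y, hy, hxW y hy⟩
  obtain ⟨s, hsK, hsfin, hscov⟩ :=
    hK'.elim_finite_subcover_image (fun x hx => hWopen x hx) hcover
  refine ⟨(fun x => netSet u (p x)) '' s, ?_, hsfin.image _, ?_, ?_⟩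
  · rintro _ ⟨x, hx, rfl⟩; exact Set.mem_range_self _
  · intro y hy
    have hy2 : (show WeakSpace ℝ X from y) ∈ ⋃ x ∈ s, (show Set (WeakSpace ℝ X) from W x) :=
      hscov hy
    obtain ⟨x, hx, hyW⟩ := Set.mem_iUnion₂.mp hy2
    refine Set.mem_sUnion.mpr ⟨netSet u (p x), Set.mem_image_of_mem _ hx, ?_⟩
    rw [hNeq x (hsK hx)]
    exact ⟨by simpa [Metric.mem_closedBall, dist_zero_right] using hm y hy, hyW⟩
  · intro y hy
    obtain ⟨t, ⟨x, hx, rfl⟩, hyt⟩ := hy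
    exact hNU x (hsK hx) hyt
end

section
/- For a real normed space X the following conditions are equivalent: (1) X endowed with its weak topology is k-metrizable; (2) X endowed with its weak topology is cs-metrizable; (3) X has the Schur property, i.e. every sequence in X converging to a point x in the weak topology converges to x in norm. -/
open Filter Topology Set

universe u

/-- A Hausdorff space `X` is cs-metrizable if it is the image of a metrizable space
under a continuous surjection admitting a sequentially continuous section. -/
def CsMetrizable (X : Type u) [TopologicalSpace X] : Prop :=
  ∃ (M : Type u) (_ : MetricSpace M) (f : M → X) (s : X → M),
    Continuous f ∧ Function.Surjective f ∧ (∀ x, f (s x) = x) ∧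
    ∀ (x : ℕ → X) (a : X), Tendsto x atTop (𝓝 a) →
      ∃ m : M, Tendsto (fun n => s (x n)) atTop (𝓝 m)

/-- A Hausdorff space `X` is k-metrizable if it is the image of a metrizable space
under a continuous surjection for which preimages of compact sets are compact. -/
def KMetrizable (X : Type u) [TopologicalSpace X] : Prop :=
  ∃ (M : Type u) (_ : MetricSpace M) (f : M → X),
    Continuous f ∧ Function.Surjective f ∧
    ∀ K : Set X, IsCompact K → IsCompact (f ⁻¹' K)

open NormedSpace

variable {X : Type u} [NormedAddCommGroup X] [NormedSpace ℝ X]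

lemma weak_continuous_dual (φ : StrongDual ℝ X) : Continuous[weakTopology X, _] ⇑φ :=
  continuous_iInf_dom continuous_induced_dom

lemma weak_tendsto_iff {ι : Type*} {l : Filter ι} {x : ι → X} {a : X} :
    Tendsto x l (@nhds X (weakTopology X) a) ↔
      ∀ φ : StrongDual ℝ X, Tendsto (fun n => φ (x n)) l (𝓝 (φ a)) := by
  rw [weakTopology, _root_.nhds_iInf, tendsto_iInf]
  refine forall_congr' fun φ => ?_
  rw [nhds_induced, tendsto_comap_iff]
  rfl

lemma weak_tendsto_unique {x : ℕ → X} {a b : X}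
    (ha : Tendsto x atTop (@nhds X (weakTopology X) a))
    (hb : Tendsto x atTop (@nhds X (weakTopology X) b)) : a = b :=
  (SeparatingDual.eq_iff_forall_dual_eq (R := ℝ)).2 fun φ =>
    tendsto_nhds_unique (weak_tendsto_iff.1 ha φ) (weak_tendsto_iff.1 hb φ)

lemma norm_le_weak : (inferInstance : TopologicalSpace X) ≤ weakTopology X :=
  le_iInf fun φ => continuous_iff_le_induced.1 φ.continuous

lemma weak_bounded_of_conv {x : ℕ → X} {a : X}
    (h : ∀ φ : StrongDual ℝ X, Tendsto (fun n => φ (x n)) atTop (𝓝 (φ a))) :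
    ∃ C : ℝ, ∀ n, ‖x n‖ ≤ C := by
  set g : ℕ → StrongDual ℝ (StrongDual ℝ X) := fun n => inclusionInDoubleDual ℝ X (x n) with hg
  have hpt : ∀ φ : StrongDual ℝ X, ∃ C, ∀ n, ‖g n φ‖ ≤ C := by
    intro φ
    have : Tendsto (fun n => ‖φ (x n)‖) atTop (𝓝 ‖φ a‖) := (h φ).norm
    obtain ⟨C, hC⟩ := this.bddAbove_range
    exact ⟨C, fun n => hC ⟨n, rfl⟩⟩
  obtain ⟨C', hC'⟩ := banach_steinhaus hpt
  refine ⟨C', fun n => ?_⟩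
  have : ‖g n‖ = ‖x n‖ := (inclusionInDoubleDualLi ℝ (E := X)).norm_map (x n)
  rw [← this]; exact hC' n

lemma exists_notSchur_seq
    (h : ¬ ∀ (x : ℕ → X) (a : X),
        Tendsto x atTop (@nhds X (weakTopology X) a) → Tendsto x atTop (𝓝 a)) :
    ∃ (u : ℕ → X) (ε : ℝ), 0 < ε ∧ (∀ n, ε ≤ ‖u n‖) ∧
      ∀ φ : StrongDual ℝ X, Tendsto (fun n => φ (u n)) atTop (𝓝 0) := by
  push_neg at h
  obtain ⟨x, a, hweak, hnorm⟩ := h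
  rw [Metric.tendsto_atTop] at hnorm
  push_neg at hnorm
  obtain ⟨ε, hε, hfreq⟩ := hnorm
  have hfr : ∃ᶠ n in atTop, ε ≤ dist (x n) a := by
    rw [frequently_atTop]
    intro N; obtain ⟨n, hnN, hn⟩ := hfreq N; exact ⟨n, hnN, hn⟩
  obtain ⟨g, hg, hgε⟩ := Filter.extraction_of_frequently_atTop hfr
  refine ⟨fun n => x (g n) - a, ε, hε, ?_, ?_⟩
  · intro n; simpa [dist_eq_norm] using hgε n
  · intro φ
    have h1 : Tendsto (fun n => φ (x (g n))) atTop (𝓝 (φ a)) :=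
      (weak_tendsto_iff.1 hweak φ).comp hg.tendsto_atTop
    simpa [map_sub] using h1.sub_const (φ a)

lemma fan_contradiction {u : ℕ → X} {ε : ℝ} (hε : 0 < ε) (hun : ∀ n, ε ≤ ‖u n‖)
    (huw : ∀ φ : StrongDual ℝ X, Tendsto (fun n => φ (u n)) atTop (𝓝 0))
    {c m : ℕ → ℕ} (hc : ∀ k, k ≤ c k) {b : X}
    (hb : Tendsto (fun k => u (c k) + ((c k : ℝ) + 1) • u (m k)) atTop
      (@nhds X (weakTopology X) b)) : False := by
  have huw0 : ∀ φ : StrongDual ℝ X, Tendsto (fun n => φ (u n)) atTop (𝓝 ((φ : X →L[ℝ] ℝ) 0)) := by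
    simpa using huw
  obtain ⟨C, hC⟩ := weak_bounded_of_conv huw0
  obtain ⟨C', hC'⟩ := weak_bounded_of_conv (weak_tendsto_iff.1 hb)
  have key : ∀ k : ℕ, ((c k : ℝ) + 1) * ε ≤ C' + C := by
    intro k
    have h1 : ((c k : ℝ) + 1) * ε ≤ ((c k : ℝ) + 1) * ‖u (m k)‖ :=
      mul_le_mul_of_nonneg_left (hun _) (by positivity)
    have h2 : ((c k : ℝ) + 1) * ‖u (m k)‖ = ‖((c k : ℝ) + 1) • u (m k)‖ := by
      rw [norm_smul, Real.norm_eq_abs, abs_of_nonneg (by positivity)]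
    have h3 : ‖((c k : ℝ) + 1) • u (m k)‖
        = ‖(u (c k) + ((c k : ℝ) + 1) • u (m k)) - u (c k)‖ := by
      congr 1; abel
    have h4 : ‖(u (c k) + ((c k : ℝ) + 1) • u (m k)) - u (c k)‖
        ≤ ‖u (c k) + ((c k : ℝ) + 1) • u (m k)‖ + ‖u (c k)‖ := norm_sub_le _ _
    have h5 := hC' k
    have h6 := hC (c k)
    linarith
  obtain ⟨k, hk⟩ := exists_nat_gt ((C' + C) / ε)
  have hck : ((C' + C) / ε) < (c k : ℝ) + 1 := by
    have : (k : ℝ) ≤ (c k : ℝ) := by exact_mod_cast hc k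
    linarith
  have := key k
  rw [div_lt_iff₀ hε] at hck
  linarith

lemma tendsto_of_even_odd {α : Type*} [TopologicalSpace α] {w : ℕ → α} {cc : α}
    (he : Tendsto (fun k => w (2 * k)) atTop (𝓝 cc))
    (ho : Tendsto (fun k => w (2 * k + 1)) atTop (𝓝 cc)) : Tendsto w atTop (𝓝 cc) := by
  rw [tendsto_def] at he ho ⊢
  intro U hU
  obtain ⟨N₁, hN₁⟩ := (mem_atTop_sets.1 (he U hU))
  obtain ⟨N₂, hN₂⟩ := (mem_atTop_sets.1 (ho U hU))
  rw [mem_atTop_sets]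
  refine ⟨2 * N₁ + 2 * N₂ + 2, fun n hn => ?_⟩
  rcases Nat.even_or_odd n with ⟨k, hk⟩ | ⟨k, hk⟩
  · have : N₁ ≤ k := by omega
    have := hN₁ k this
    simpa [show 2 * k = n by omega] using this
  · have : N₂ ≤ k := by omega
    have := hN₂ k this
    simpa [show 2 * k + 1 = n by omega] using this


section directions

-- weak convergence of the fan rows
lemma fan_row_tendsto {u : ℕ → X}
    (huw : ∀ φ : StrongDual ℝ X, Tendsto (fun n => φ (u n)) atTop (𝓝 0)) (n : ℕ) :
    Tendsto (fun m => u n + ((n : ℝ) + 1) • u m) atTop (@nhds X (weakTopology X) (u n)) := by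
  rw [weak_tendsto_iff]
  intro φ
  have h : Tendsto (fun m => φ (u n) + ((n : ℝ) + 1) * φ (u m)) atTop
      (𝓝 (φ (u n) + ((n : ℝ) + 1) * 0)) := tendsto_const_nhds.add ((huw φ).const_mul _)
  simpa [map_add, map_smul, smul_eq_mul] using h

lemma u_weak_null {u : ℕ → X}
    (huw : ∀ φ : StrongDual ℝ X, Tendsto (fun n => φ (u n)) atTop (𝓝 0)) :
    Tendsto u atTop (@nhds X (weakTopology X) 0) := by
  rw [weak_tendsto_iff]; intro φ; simpa using huw φ

lemma cs_to_schur (h : @CsMetrizable X (weakTopology X)) :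
    ∀ (x : ℕ → X) (a : X), Tendsto x atTop (@nhds X (weakTopology X) a) →
      Tendsto x atTop (𝓝 a) := by
  by_contra hns
  obtain ⟨u, ε, hε, hun, huw⟩ := exists_notSchur_seq hns
  obtain ⟨M, _inst, f, s, hf, hfs, hsec, hcs⟩ := h
  set y : ℕ → ℕ → X := fun n m => u n + ((n : ℝ) + 1) • u m with hy
  -- for each n : s ∘ (y n) converges to s (u n)
  have hyn : ∀ n, Tendsto (fun m => s (y n m)) atTop (𝓝 (s (u n))) := by
    intro n
    set v : ℕ → X := fun k => if k % 2 = 0 then y n (k / 2) else u n with hv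
    have hvw : Tendsto v atTop (@nhds X (weakTopology X) (u n)) := by
      rw [weak_tendsto_iff]
      intro φ
      apply tendsto_of_even_odd
      · have := weak_tendsto_iff.1 (fan_row_tendsto huw n) φ
        have h2 : (fun k => φ (v (2 * k))) = fun k => φ (y n k) := by
          funext k; simp [hv, Nat.mul_div_cancel_left k (by norm_num : 0 < 2)]
        rw [h2]; exact this
      · have h2 : (fun k => φ (v (2 * k + 1))) = fun _ => φ (u n) := by
          funext k; simp [hv, Nat.mul_add_mod]
        rw [h2]; exact tendsto_const_nhds
    obtain ⟨m0, hm0⟩ := hcs v (u n) hvw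
    have hodd : Tendsto (fun k => s (v (2 * k + 1))) atTop (𝓝 m0) :=
      hm0.comp ((show StrictMono (fun k : ℕ => 2 * k + 1) from
        strictMono_nat_of_lt_succ fun n => by omega).tendsto_atTop)
    have hconst : (fun k => s (v (2 * k + 1))) = fun _ => s (u n) := by
      funext k; simp [hv, Nat.mul_add_mod]
    have hm0eq : m0 = s (u n) := by
      rw [hconst] at hodd
      exact (tendsto_nhds_unique tendsto_const_nhds hodd).symm
    have heven : Tendsto (fun k => s (v (2 * k))) atTop (𝓝 m0) :=
      hm0.comp ((show StrictMono (fun k : ℕ => 2 * k) from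
        strictMono_nat_of_lt_succ fun n => by omega).tendsto_atTop)
    have heq : (fun k => s (v (2 * k))) = fun k => s (y n k) := by
      funext k; simp [hv, Nat.mul_div_cancel_left k (by norm_num : 0 < 2)]
    rw [heq, hm0eq] at heven
    exact heven
  -- s (u n) converges to s 0
  have hsu : Tendsto (fun n => s (u n)) atTop (𝓝 (s 0)) := by
    set w : ℕ → X := fun k => if k % 2 = 0 then u (k / 2) else 0 with hw
    have hww : Tendsto w atTop (@nhds X (weakTopology X) 0) := by
      rw [weak_tendsto_iff]
      intro φ
      apply tendsto_of_even_odd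
      · have h2 : (fun k => φ (w (2 * k))) = fun k => φ (u k) := by
          funext k; simp [hw, Nat.mul_div_cancel_left k (by norm_num : 0 < 2)]
        rw [h2]; simpa using huw φ
      · have h2 : (fun k => φ (w (2 * k + 1))) = fun _ => φ (0 : X) := by
          funext k; simp [hw, Nat.mul_add_mod]
        rw [h2]; exact tendsto_const_nhds
    obtain ⟨m1, hm1⟩ := hcs w 0 hww
    have hodd : Tendsto (fun k => s (w (2 * k + 1))) atTop (𝓝 m1) :=
      hm1.comp ((show StrictMono (fun k : ℕ => 2 * k + 1) from
        strictMono_nat_of_lt_succ fun n => by omega).tendsto_atTop)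
    have hconst : (fun k => s (w (2 * k + 1))) = fun _ => s 0 := by
      funext k; simp [hw, Nat.mul_add_mod]
    have hm1eq : m1 = s 0 := by
      rw [hconst] at hodd
      exact (tendsto_nhds_unique tendsto_const_nhds hodd).symm
    have heven : Tendsto (fun k => s (w (2 * k))) atTop (𝓝 m1) :=
      hm1.comp ((show StrictMono (fun k : ℕ => 2 * k) from
        strictMono_nat_of_lt_succ fun n => by omega).tendsto_atTop)
    have heq : (fun k => s (w (2 * k))) = fun k => s (u k) := by
      funext k; simp [hw, Nat.mul_div_cancel_left k (by norm_num : 0 < 2)]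
    rw [heq, hm1eq] at heven
    exact heven
  -- choose the diagonal
  have hchoice : ∀ n : ℕ, ∃ m, dist (s (y n m)) (s (u n)) < 1 / ((n : ℝ) + 1) := by
    intro n
    have := (Metric.tendsto_atTop.1 (hyn n)) (1 / ((n : ℝ) + 1)) (by positivity)
    obtain ⟨N, hN⟩ := this
    exact ⟨N, hN N le_rfl⟩
  choose m hm using hchoice
  have hdiag : Tendsto (fun n => s (y n (m n))) atTop (𝓝 (s 0)) := by
    rw [tendsto_iff_dist_tendsto_zero]
    apply squeeze_zero (fun n => dist_nonneg)
      (g := fun n : ℕ => 1 / ((n : ℝ) + 1) + dist (s (u n)) (s 0))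
    · intro n
      calc dist (s (y n (m n))) (s 0)
          ≤ dist (s (y n (m n))) (s (u n)) + dist (s (u n)) (s 0) := dist_triangle _ _ _
        _ ≤ 1 / ((n : ℝ) + 1) + dist (s (u n)) (s 0) := by
            have := (hm n).le; linarith
    · have h1 : Tendsto (fun n : ℕ => 1 / ((n : ℝ) + 1)) atTop (𝓝 0) :=
        tendsto_one_div_add_atTop_nhds_zero_nat
      have h2 : Tendsto (fun n => dist (s (u n)) (s 0)) atTop (𝓝 0) :=
        tendsto_iff_dist_tendsto_zero.1 hsu
      simpa using h1.add h2
  -- transport through f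
  have hfd : Tendsto (fun n => y n (m n)) atTop (@nhds X (weakTopology X) (f (s 0))) := by
    have := (@Continuous.tendsto M X _ (weakTopology X) f hf (s 0)).comp hdiag
    have heq : (f ∘ fun n => s (y n (m n))) = fun n => y n (m n) := by
      funext n; simp [Function.comp, hsec]
    rwa [heq] at this
  exact fan_contradiction hε hun huw (fun k => le_rfl) hfd

lemma k_to_schur (h : @KMetrizable X (weakTopology X)) :
    ∀ (x : ℕ → X) (a : X), Tendsto x atTop (@nhds X (weakTopology X) a) →
      Tendsto x atTop (𝓝 a) := by
  by_contra hns
  obtain ⟨u, ε, hε, hun, huw⟩ := exists_notSchur_seq hns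
  obtain ⟨M, _inst, f, hf, hfs, hcpt⟩ := h
  set y : ℕ → ℕ → X := fun n m => u n + ((n : ℝ) + 1) • u m with hy
  have hyrow := fan_row_tendsto huw
  -- compact sets
  have hKn : ∀ n, @IsCompact X (weakTopology X) (insert (u n) (range (y n))) := fun n =>
    @Filter.Tendsto.isCompact_insert_range X (weakTopology X) (y n) (u n) (hyrow n)
  have hKbig : @IsCompact X (weakTopology X) (insert 0 (range u)) :=
    @Filter.Tendsto.isCompact_insert_range X (weakTopology X) u 0 (u_weak_null huw)
  -- preimages
  choose p hp using fun n m => hfs (y n m)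
  have hpmem : ∀ n m, p n m ∈ f ⁻¹' insert (u n) (range (y n)) := by
    intro n m; simp only [mem_preimage, hp]; exact mem_insert_of_mem _ ⟨m, rfl⟩
  have hsub : ∀ n : ℕ, ∃ q ∈ f ⁻¹' insert (u n) (range (y n)), ∃ ψ : ℕ → ℕ,
      StrictMono ψ ∧ Tendsto (p n ∘ ψ) atTop (𝓝 q) :=
    fun n => (hcpt _ (hKn n)).tendsto_subseq (hpmem n)
  choose q hqmem ψ hψ hψt using hsub
  -- f q n = u n
  have hfq : ∀ n, f (q n) = u n := by
    intro n
    have h1 : Tendsto (fun j => f (p n (ψ n j))) atTop (@nhds X (weakTopology X) (f (q n))) :=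
      (@Continuous.tendsto M X _ (weakTopology X) f hf (q n)).comp (hψt n)
    have h2 : (fun j => f (p n (ψ n j))) = fun j => y n (ψ n j) := by
      funext j; exact hp n (ψ n j)
    rw [h2] at h1
    have h3 : Tendsto (fun j => y n (ψ n j)) atTop (@nhds X (weakTopology X) (u n)) :=
      (hyrow n).comp (hψ n).tendsto_atTop
    exact weak_tendsto_unique h1 h3
  -- choose approximations
  have hchoice : ∀ n : ℕ, ∃ j, dist (p n (ψ n j)) (q n) < 1 / ((n : ℝ) + 1) := by
    intro n
    obtain ⟨N, hN⟩ := (Metric.tendsto_atTop.1 (hψt n)) (1 / ((n : ℝ) + 1)) (by positivity)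
    exact ⟨N, hN N le_rfl⟩
  choose j hj using hchoice
  set m : ℕ → ℕ := fun n => ψ n (j n) with hmdef
  set r : ℕ → M := fun n => p n (m n) with hrdef
  -- q n lies in the compact preimage of Kbig
  have hqbig : ∀ n, q n ∈ f ⁻¹' insert 0 (range u) := by
    intro n; simp only [mem_preimage, hfq]; exact mem_insert_of_mem _ ⟨n, rfl⟩
  obtain ⟨qinf, hqinf, σ, hσ, hσt⟩ := (hcpt _ hKbig).tendsto_subseq hqbig
  -- r ∘ σ tends to qinf
  have hrt : Tendsto (fun k => r (σ k)) atTop (𝓝 qinf) := by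
    rw [tendsto_iff_dist_tendsto_zero]
    apply squeeze_zero (fun k => dist_nonneg)
      (g := fun k : ℕ => 1 / ((k : ℝ) + 1) + dist (q (σ k)) qinf)
    · intro k
      have h1 : dist (r (σ k)) (q (σ k)) < 1 / ((σ k : ℝ) + 1) := hj (σ k)
      have h2 : 1 / ((σ k : ℝ) + 1) ≤ 1 / ((k : ℝ) + 1) := by
        apply one_div_le_one_div_of_le (by positivity)
        have h := hσ.le_apply (x := k)
        have : (k : ℝ) ≤ (σ k : ℝ) := by exact_mod_cast h
        linarith
      calc dist (r (σ k)) qinf ≤ dist (r (σ k)) (q (σ k)) + dist (q (σ k)) qinf :=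
            dist_triangle _ _ _
        _ ≤ 1 / ((k : ℝ) + 1) + dist (q (σ k)) qinf := by linarith
    · have h1 : Tendsto (fun k : ℕ => 1 / ((k : ℝ) + 1)) atTop (𝓝 0) :=
        tendsto_one_div_add_atTop_nhds_zero_nat
      have h2 : Tendsto (fun k => dist (q (σ k)) qinf) atTop (𝓝 0) :=
        tendsto_iff_dist_tendsto_zero.1 hσt
      simpa using h1.add h2
  have hfr : Tendsto (fun k => y (σ k) (m (σ k))) atTop
      (@nhds X (weakTopology X) (f qinf)) := by
    have h1 := (@Continuous.tendsto M X _ (weakTopology X) f hf qinf).comp hrt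
    have h2 : (fun k => f (r (σ k))) = fun k => y (σ k) (m (σ k)) := by
      funext k; exact hp (σ k) (m (σ k))
    rw [← h2]; exact h1
  exact fan_contradiction hε hun huw (fun k => hσ.le_apply) hfr

end directions


-- ========== Schur to cs ==========

lemma schur_to_cs
    (h : ∀ (x : ℕ → X) (a : X), Tendsto x atTop (@nhds X (weakTopology X) a) →
      Tendsto x atTop (𝓝 a)) : @CsMetrizable X (weakTopology X) := by
  refine ⟨X, inferInstance, id, id, ?_, Function.surjective_id, fun x => rfl, ?_⟩
  · exact continuous_id_iff_le.2 norm_le_weak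
  · intro x a hx
    exact ⟨a, by simpa using h x a hx⟩

-- ========== Schur to k ==========

/-- a real cluster value of a convergent real sequence equals the limit -/
lemma real_cluster_eq {v : ℕ → ℝ} {y c : ℝ} (hy : MapClusterPt y atTop v)
    (hc : Tendsto v atTop (𝓝 c)) : y = c := by
  have h1 : ClusterPt y (Filter.map v atTop) := hy.clusterPt
  have h2 : Filter.map v atTop ≤ 𝓝 c := hc
  have h3 : NeBot (𝓝 y ⊓ 𝓝 c) := by
    have := h1.neBot
    exact neBot_of_le (le_inf inf_le_left (le_trans inf_le_right h2))
  exact eq_of_nhds_neBot h3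

/-- a cluster point of a sequence lying in a closed set belongs to the set -/
lemma clusterPt_mem_of_closed {Z : Type*} [TopologicalSpace Z] {v : ℕ → Z} {y : Z}
    {C : Set Z} (hy : MapClusterPt y atTop v) (hv : ∀ n, v n ∈ C) (hC : IsClosed C) :
    y ∈ C := by
  have h1 : Filter.map v atTop ≤ 𝓟 C := le_principal_iff.2 (mem_map.2 (univ_mem' hv))
  have h2 : ClusterPt y (𝓟 C) := hy.clusterPt.mono h1
  rw [← hC.closure_eq]
  exact mem_closure_iff_clusterPt.2 h2

/-- functional vanishing on a closed submodule and nonzero at a point outside -/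
lemma exists_dual_annihilator {Y : Submodule ℝ X} (hYc : IsClosed (Y : Set X)) {a : X}
    (ha : a ∉ Y) : ∃ ψ : StrongDual ℝ X, (∀ z ∈ Y, ψ z = 0) ∧ ψ a ≠ 0 := by
  haveI : IsClosed (Y : Set X) := hYc
  set π₀ : X →ₗ[ℝ] (X ⧸ Y) := Y.mkQ with hπ₀
  have hbound : ∀ z : X, ‖π₀ z‖ ≤ 1 * ‖z‖ := by
    intro z
    rw [one_mul]
    exact Submodule.Quotient.norm_mk_le Y z
  set π : X →L[ℝ] (X ⧸ Y) := π₀.mkContinuous 1 hbound with hπ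
  have hπa : π a ≠ 0 := by
    simp only [hπ, LinearMap.mkContinuous_apply, hπ₀, Submodule.mkQ_apply]
    rw [ne_eq, Submodule.Quotient.mk_eq_zero]
    exact ha
  obtain ⟨g, _, hg2⟩ := exists_dual_vector ℝ (π a) (norm_ne_zero_iff.2 hπa)
  refine ⟨g.comp π, ?_, ?_⟩
  · intro z hz
    have : π z = 0 := by
      simp only [hπ, LinearMap.mkContinuous_apply, hπ₀, Submodule.mkQ_apply]
      rw [Submodule.Quotient.mk_eq_zero]
      exact hz
    simp [ContinuousLinearMap.comp_apply, this]
  · simp only [ContinuousLinearMap.comp_apply, hg2]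
    exact_mod_cast norm_ne_zero_iff.2 hπa

lemma weakly_closed_of_closed_submodule {Y : Submodule ℝ X} (hYc : IsClosed (Y : Set X)) :
    @IsClosed X (weakTopology X) (Y : Set X) := by
  letI : TopologicalSpace X := weakTopology X
  rw [← isOpen_compl_iff, isOpen_iff_mem_nhds]
  intro a ha
  obtain ⟨ψ, hψY, hψa⟩ := exists_dual_annihilator hYc ha
  have hopen : IsOpen (⇑ψ ⁻¹' ({0}ᶜ)) :=
    (isOpen_compl_singleton).preimage (weak_continuous_dual ψ)
  have hmem : a ∈ ⇑ψ ⁻¹' ({0}ᶜ) := by simpa using hψa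
  refine Filter.mem_of_superset (hopen.mem_nhds hmem) ?_
  intro z hz hzY
  exact hz (hψY z hzY)

lemma weak_cluster_comp {w : ℕ → X} {z : X} (φ : StrongDual ℝ X)
    (hz : @MapClusterPt X (weakTopology X) ℕ z atTop w) :
    MapClusterPt (φ z) atTop (fun k => φ (w k)) := by
  letI : TopologicalSpace X := weakTopology X
  exact hz.continuousAt_comp (weak_continuous_dual φ).continuousAt

/-- Eberlein–Šmulian style core: a sequence in a weakly compact set has a weakly
convergent subsequence with limit in the set. -/
lemma weak_compact_seq {K : Set X} (hK : @IsCompact X (weakTopology X) K)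
    {x : ℕ → X} (hx : ∀ n, x n ∈ K) :
    ∃ a ∈ K, ∃ g : ℕ → ℕ, StrictMono g ∧
      Tendsto (x ∘ g) atTop (@nhds X (weakTopology X) a) := by
  classical
  -- the separable closed subspace containing the sequence
  set Y : Submodule ℝ X := (Submodule.span ℝ (range x)).topologicalClosure with hY
  have hYc : IsClosed (Y : Set X) := Submodule.isClosed_topologicalClosure _
  have hxY : ∀ n, x n ∈ Y := fun n =>
    (Submodule.le_topologicalClosure _) (Submodule.subset_span ⟨n, rfl⟩)
  have hYsep : TopologicalSpace.IsSeparable (Y : Set X) := by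
    have h1 : TopologicalSpace.IsSeparable (Submodule.span ℝ (range x) : Set X) :=
      TopologicalSpace.IsSeparable.span ((countable_range x).isSeparable)
    have h2 := h1.closure
    rwa [hY, Submodule.topologicalClosure_coe]
  obtain ⟨D, hDc, hYD⟩ := hYsep
  obtain ⟨e, he⟩ := (hDc.insert 0).exists_eq_range (insert_nonempty 0 D)
  -- a countable separating family of functionals
  have hφ : ∀ j : ℕ, ∃ φ : StrongDual ℝ X, ‖φ‖ ≤ 1 ∧ φ (e j) = ‖e j‖ := fun j =>
    exists_dual_vector'' ℝ (e j)
  choose φ hφ1 hφ2 using hφ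
  have sep : ∀ z ∈ (Y : Set X), (∀ j, φ j z = 0) → z = 0 := by
    intro z hz hz0
    by_contra hne
    have hzpos : 0 < ‖z‖ := norm_pos_iff.2 hne
    have hzcl : z ∈ closure D := hYD hz
    obtain ⟨d, hdD, hdz⟩ := Metric.mem_closure_iff.1 hzcl (‖z‖ / 4) (by linarith)
    have hdr : d ∈ range e := by rw [← he]; exact mem_insert_of_mem _ hdD
    obtain ⟨j, rfl⟩ := hdr
    have h1 : ‖e j‖ = φ j (e j) := (hφ2 j).symm
    have h2 : φ j (e j) = φ j (e j - z) := by rw [map_sub, hz0 j, sub_zero]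
    have h3 : φ j (e j - z) ≤ ‖e j - z‖ := by
      calc φ j (e j - z) ≤ ‖φ j (e j - z)‖ := le_abs_self _
        _ ≤ ‖φ j‖ * ‖e j - z‖ := (φ j).le_opNorm _
        _ ≤ 1 * ‖e j - z‖ := mul_le_mul_of_nonneg_right (hφ1 j) (norm_nonneg _)
        _ = ‖e j - z‖ := one_mul _
    have h4 : ‖e j - z‖ = dist z (e j) := by rw [dist_eq_norm, norm_sub_rev]
    have h5 : ‖z‖ ≤ dist z (e j) + ‖e j‖ := by
      calc ‖z‖ = ‖(z - e j) + e j‖ := by rw [sub_add_cancel]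
        _ ≤ ‖z - e j‖ + ‖e j‖ := norm_add_le _ _
        _ = dist z (e j) + ‖e j‖ := by rw [dist_eq_norm]
    have h6 : ‖e j‖ ≤ dist z (e j) := by rw [h1, h2, ← h4] at *; linarith [h3]
    linarith
  have hYw : @IsClosed X (weakTopology X) (Y : Set X) := weakly_closed_of_closed_submodule hYc
  -- membership of weak cluster points in Y
  have hclY : ∀ (w : ℕ → X) (z : X), (∀ k, w k ∈ (Y : Set X)) →
      @MapClusterPt X (weakTopology X) ℕ z atTop w → z ∈ Y := by
    intro w z hw hz
    exact @clusterPt_mem_of_closed X (weakTopology X) w z (↑Y) hz hw hYw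
  -- uniform bounds for each functional on K
  have hbdd : ∀ j : ℕ, ∃ C : ℝ, ∀ z ∈ K, |φ j z| ≤ C := by
    intro j
    have himg : IsCompact (⇑(φ j) '' K) :=
      @IsCompact.image X ℝ (weakTopology X) _ K (⇑(φ j)) hK (weak_continuous_dual (φ j))
    obtain ⟨R, hR⟩ := himg.isBounded.subset_closedBall 0
    refine ⟨R, fun z hz => ?_⟩
    have := hR ⟨z, hz, rfl⟩
    simpa [Real.dist_eq] using this
  choose C hC using hbdd
  -- diagonal subsequence making all functionals converge
  set F : ℕ → (ℕ → ℝ) := fun n j => φ j (x n) with hF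
  have hFmem : ∀ n, F n ∈ univ.pi (fun j => Metric.closedBall (0 : ℝ) (C j)) := by
    intro n
    intro j _
    simpa [Real.dist_eq] using hC j (x n) (hx n)
  have hS : IsCompact (univ.pi (fun j => Metric.closedBall (0 : ℝ) (C j))) :=
    isCompact_univ_pi fun j => isCompact_closedBall _ _
  obtain ⟨c, _, g, hg, hgt⟩ := hS.tendsto_subseq hFmem
  have hpt : ∀ j, Tendsto (fun k => φ j (x (g k))) atTop (𝓝 (c j)) := by
    intro j
    have := tendsto_pi_nhds.1 hgt j
    simpa [hF, Function.comp] using this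
  -- weak cluster point of the subsequence
  have hmap : Filter.map (x ∘ g) atTop ≤ 𝓟 K :=
    le_principal_iff.2 (mem_map.2 (univ_mem' fun k => hx (g k)))
  obtain ⟨a, haK, hacl⟩ := @IsCompact.exists_mapClusterPt X (weakTopology X) K ℕ hK atTop _ (x ∘ g) hmap
  have haY : a ∈ Y := hclY (x ∘ g) a (fun k => hxY (g k)) hacl
  have haval : ∀ j, φ j a = c j := by
    intro j
    exact real_cluster_eq (weak_cluster_comp (φ j) hacl) (hpt j)
  -- show the subsequence converges weakly to a
  refine ⟨a, haK, g, hg, ?_⟩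
  by_contra hnt
  rw [tendsto_def] at hnt
  push_neg at hnt
  obtain ⟨U, hU, hfreq⟩ := hnt
  obtain ⟨V, ⟨haV, hVopen⟩, hVU⟩ := (@nhds_basis_opens X (weakTopology X) a).mem_iff.1 hU
  have hfreq2 : ¬ ∀ᶠ k in atTop, (x ∘ g) k ∈ U := hfreq
  rw [Filter.not_eventually] at hfreq2
  have hfreq' : ∃ᶠ k in atTop, (x ∘ g) k ∉ V :=
    hfreq2.mono fun k hk hV => hk (hVU hV)
  obtain ⟨h, hh, hhV⟩ := Filter.extraction_of_frequently_atTop hfreq'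
  have hmap2 : Filter.map (x ∘ g ∘ h) atTop ≤ 𝓟 K :=
    le_principal_iff.2 (mem_map.2 (univ_mem' fun k => hx (g (h k))))
  obtain ⟨b, hbK, hbcl⟩ := @IsCompact.exists_mapClusterPt X (weakTopology X) K ℕ hK atTop _ (x ∘ g ∘ h) hmap2
  have hbY : b ∈ Y := hclY (x ∘ g ∘ h) b (fun k => hxY (g (h k))) hbcl
  have hbval : ∀ j, φ j b = c j := by
    intro j
    exact real_cluster_eq (weak_cluster_comp (φ j) hbcl) ((hpt j).comp hh.tendsto_atTop)
  have hbV : b ∉ V := by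
    have hVc : @IsClosed X (weakTopology X) Vᶜ := @IsOpen.isClosed_compl X (weakTopology X) V hVopen
    exact @clusterPt_mem_of_closed X (weakTopology X) (x ∘ g ∘ h) b Vᶜ hbcl (fun k => hhV k) hVc
  have hab : a = b := by
    have hsub : a - b ∈ Y := Y.sub_mem haY hbY
    have hz : ∀ j, φ j (a - b) = 0 := by
      intro j; rw [map_sub, haval j, hbval j, sub_self]
    exact sub_eq_zero.1 (sep (a - b) hsub hz)
  exact hbV (hab ▸ haV)

lemma schur_to_k
    (h : ∀ (x : ℕ → X) (a : X), Tendsto x atTop (@nhds X (weakTopology X) a) →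
      Tendsto x atTop (𝓝 a)) : @KMetrizable X (weakTopology X) := by
  refine ⟨X, inferInstance, id, continuous_id_iff_le.2 norm_le_weak,
    Function.surjective_id, ?_⟩
  intro K hK
  rw [preimage_id]
  apply IsSeqCompact.isCompact
  intro x hx
  obtain ⟨a, haK, g, hg, hgt⟩ := weak_compact_seq hK hx
  exact ⟨a, haK, g, hg, h (x ∘ g) a hgt⟩


/-- For a real normed space `X` the following are equivalent:
(1) `X` with the weak topology is k-metrizable; (2) `X` with the weak topology is
cs-metrizable; (3) `X` has the Schur property. -/
theorem stmt_18 {X : Type u} [NormedAddCommGroup X] [NormedSpace ℝ X] :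
    List.TFAE
      [ @KMetrizable X (weakTopology X),
        @CsMetrizable X (weakTopology X),
        ∀ (x : ℕ → X) (a : X),
          Tendsto x atTop (@nhds X (weakTopology X) a) →
          Tendsto x atTop (𝓝 a) ] := by
  tfae_have 1 → 3 := k_to_schur
  tfae_have 2 → 3 := cs_to_schur
  tfae_have 3 → 1 := schur_to_k
  tfae_have 3 → 2 := schur_to_cs
  tfae_finish
end
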